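/- arXiv:1901.11014 — 4 statements merged into one kernel-verified Lean document; each statement's English description precedes it below -/
import Mathlib

section
/- Let E ⊂ ℝ^n be nonempty compact with diameter M, let s > n and r > 0. If a Borel probability measure μ on E satisfies ∫ φ_r^s(x−y) dμ(y) ≥ γ for every x ∈ E, then N_r(E) ≤ c_{n,s}/γ where c_{n,s} depends only on n and s. -/
open MeasureTheory Metric Classical

/-- The kernel φ_r^s(x) = min{1, (r/|x|)^s}, with value 1 at x = 0. -/
noncomputable def phiKer (n : ℕ) (s r : ℝ) (x : EuclideanSpace ℝ (Fin n)) : ℝ :=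
  if x = 0 then 1 else min 1 ((r / ‖x‖) ^ s)

/-- N_r(E): the minimal number of sets of diameter at most r needed to cover E. -/
noncomputable def coverNum {X : Type*} [PseudoMetricSpace X] (E : Set X) (r : ℝ) : ℕ :=
  sInf {k | ∃ S : Finset (Set X), S.card = k ∧ (∀ A ∈ S, Metric.diam A ≤ r) ∧ E ⊆ ⋃₀ ↑S}

lemma phiKer_nonneg (n : ℕ) {s r : ℝ} (hr : 0 < r) (x : EuclideanSpace ℝ (Fin n)) :
    0 ≤ phiKer n s r x := by
  unfold phiKer
  split
  · norm_num
  · exact le_min zero_le_one (Real.rpow_nonneg (div_nonneg hr.le (norm_nonneg _)) _)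

lemma phiKer_le_one (n : ℕ) (s r : ℝ) (x : EuclideanSpace ℝ (Fin n)) :
    phiKer n s r x ≤ 1 := by
  unfold phiKer
  split
  · exact le_rfl
  · exact min_le_left _ _

lemma phiKer_measurable (n : ℕ) (s r : ℝ) : Measurable (phiKer n s r) := by
  unfold phiKer
  refine Measurable.ite ?_ measurable_const ?_
  · exact measurableSet_eq
  · fun_prop

/-- Pointwise comparison of the kernel with a japanese-bracket type kernel. -/
lemma phiKer_key {n : ℕ} {s r : ℝ} (hs : 0 < s) (hr : 0 < r)
    (x y z : EuclideanSpace ℝ (Fin n)) (hz : dist z x < r / 4) :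
    phiKer n s r (x - y) ≤ (3 : ℝ) ^ s * (1 + r⁻¹ * ‖z - y‖) ^ (-s) := by
  have hA : (0 : ℝ) < 1 + r⁻¹ * ‖z - y‖ := by positivity
  have hRHS : (3 : ℝ) ^ s * (1 + r⁻¹ * ‖z - y‖) ^ (-s)
      = (3 / (1 + r⁻¹ * ‖z - y‖)) ^ s := by
    rw [Real.div_rpow (by norm_num) hA.le, Real.rpow_neg hA.le, div_eq_mul_inv]
  rw [hRHS]
  have hzx : ‖z - x‖ < r / 4 := by rwa [← dist_eq_norm]
  have hu : ‖z - y‖ ≤ ‖x - y‖ + r / 4 := by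
    have h1 : ‖z - y‖ ≤ ‖z - x‖ + ‖x - y‖ := norm_sub_le_norm_sub_add_norm_sub z x y
    linarith
  by_cases ht : ‖x - y‖ ≤ r
  · refine (phiKer_le_one n s r _).trans (Real.one_le_rpow ?_ hs.le)
    rw [le_div_iff₀ hA]
    have h2 : r⁻¹ * ‖z - y‖ ≤ 2 := by
      rw [inv_mul_le_iff₀ hr]
      nlinarith
    linarith
  · push_neg at ht
    have hx0 : x - y ≠ 0 := by
      intro h
      rw [h, norm_zero] at ht
      linarith
    rw [phiKer, if_neg hx0]
    refine (min_le_right _ _).trans ?_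
    have hxy : (0 : ℝ) < ‖x - y‖ := by linarith
    apply Real.rpow_le_rpow (by positivity) ?_ hs.le
    rw [div_le_div_iff₀ hxy hA]
    have hexp : r * (1 + r⁻¹ * ‖z - y‖) = r + ‖z - y‖ := by field_simp
    rw [hexp]
    nlinarith

/-- The key summation bound: a sum of the kernel over an (r/2)-separated set is bounded
by a constant depending only on n and s. -/
lemma sum_phiKer_le (n : ℕ) (hn : 1 ≤ n) {s r : ℝ} (hs : (n : ℝ) < s) (hr : 0 < r)
    (y : EuclideanSpace ℝ (Fin n)) (S : Finset (EuclideanSpace ℝ (Fin n)))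
    (hsep : ∀ x ∈ S, ∀ x' ∈ S, x ≠ x' → r / 2 ≤ dist x x') :
    ∑ x ∈ S, phiKer n s r (x - y)
      ≤ (3 : ℝ) ^ s * 4 ^ n * (∫ w : EuclideanSpace ℝ (Fin n), (1 + ‖w‖) ^ (-s)) /
        (volume (ball (0 : EuclideanSpace ℝ (Fin n)) 1)).toReal := by
  have hfrank : Module.finrank ℝ (EuclideanSpace ℝ (Fin n)) = n := finrank_euclideanSpace_fin
  haveI : Nontrivial (EuclideanSpace ℝ (Fin n)) := by
    apply Module.nontrivial_of_finrank_pos (R := ℝ)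
    rw [hfrank]; omega
  have hspos : (0 : ℝ) < s := lt_of_le_of_lt (Nat.cast_nonneg n) hs
  have hfr : (Module.finrank ℝ (EuclideanSpace ℝ (Fin n)) : ℝ) < s := by rw [hfrank]; exact hs
  set f : EuclideanSpace ℝ (Fin n) → ℝ := fun w => (1 + ‖w‖) ^ (-s) with hf
  have hI : Integrable f := integrable_one_add_norm hfr
  have hI0 : 0 ≤ ∫ w, f w := integral_nonneg fun w => Real.rpow_nonneg (by positivity) _
  set g : EuclideanSpace ℝ (Fin n) → ℝ := fun z => (1 + r⁻¹ * ‖z - y‖) ^ (-s) with hgdef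
  have hgf : g = fun z => f (r⁻¹ • (z - y)) := by
    funext z
    simp only [hf, hgdef, norm_smul, Real.norm_eq_abs, abs_of_pos (inv_pos.2 hr)]
  have hg : Integrable g := by
    rw [hgf]
    exact ((integrable_comp_smul_iff volume f (inv_ne_zero hr.ne')).2 hI).comp_sub_right y
  have hgnn : ∀ z, 0 ≤ g z := fun z => Real.rpow_nonneg (by positivity) _
  have hIg : ∫ z, g z = r ^ n * ∫ w, f w := by
    rw [hgf]
    rw [integral_sub_right_eq_self (fun z => f (r⁻¹ • z)) y]
    rw [Measure.integral_comp_inv_smul_of_nonneg volume f hr.le, hfrank, smul_eq_mul]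
  set V0 := (volume (ball (0 : EuclideanSpace ℝ (Fin n)) 1)).toReal with hV0def
  have hV0 : 0 < V0 := ENNReal.toReal_pos (measure_ball_pos _ _ one_pos).ne'
    measure_ball_lt_top.ne
  have hVball : ∀ x : EuclideanSpace ℝ (Fin n), (volume (ball x (r / 4))).toReal = (r / 4) ^ n * V0 := by
    intro x
    rw [Measure.addHaar_ball volume x (by positivity : (0:ℝ) ≤ r / 4), hfrank,
      ENNReal.toReal_mul, ENNReal.toReal_ofReal (by positivity)]
  -- per-ball estimate
  have hball : ∀ x ∈ S, phiKer n s r (x - y) * ((r / 4) ^ n * V0)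
      ≤ ∫ z in ball x (r / 4), (3 : ℝ) ^ s * g z := by
    intro x _
    have h1 : ∫ _z in ball x (r / 4), phiKer n s r (x - y) ∂volume
        = (volume (ball x (r / 4))).toReal • phiKer n s r (x - y) := setIntegral_const _
    have h2 : ∫ _z in ball x (r / 4), phiKer n s r (x - y) ∂volume
        ≤ ∫ z in ball x (r / 4), (3 : ℝ) ^ s * g z := by
      refine setIntegral_mono_on (integrableOn_const measure_ball_lt_top.ne)
        ((hg.const_mul _).integrableOn) measurableSet_ball ?_
      intro z hz
      exact phiKer_key hspos hr x y z (mem_ball.1 hz)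
    calc phiKer n s r (x - y) * ((r / 4) ^ n * V0)
        = (volume (ball x (r / 4))).toReal • phiKer n s r (x - y) := by
          rw [hVball x, smul_eq_mul, mul_comm]
      _ = ∫ _z in ball x (r / 4), phiKer n s r (x - y) ∂volume := h1.symm
      _ ≤ _ := h2
  have hdisj : (↑S : Set (EuclideanSpace ℝ (Fin n))).Pairwise (Function.onFun Disjoint fun x => ball x (r / 4)) := by
    intro a ha b hb hab
    exact ball_disjoint_ball (by linarith [hsep a ha b hb hab])
  have hsum : (∑ x ∈ S, phiKer n s r (x - y)) * ((r / 4) ^ n * V0)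
      ≤ (3 : ℝ) ^ s * (r ^ n * ∫ w, f w) := by
    rw [Finset.sum_mul]
    calc ∑ x ∈ S, phiKer n s r (x - y) * ((r / 4) ^ n * V0)
        ≤ ∑ x ∈ S, ∫ z in ball x (r / 4), (3 : ℝ) ^ s * g z :=
          Finset.sum_le_sum hball
      _ = ∫ z in ⋃ x ∈ S, ball x (r / 4), (3 : ℝ) ^ s * g z :=
          (integral_biUnion_finset S (fun _ _ => measurableSet_ball) hdisj
            (fun _ _ => ((hg.const_mul _).integrableOn))).symm
      _ ≤ ∫ z, (3 : ℝ) ^ s * g z :=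
          setIntegral_le_integral (hg.const_mul _)
            (ae_of_all _ fun z => mul_nonneg (Real.rpow_nonneg (by norm_num) _) (hgnn z))
      _ = (3 : ℝ) ^ s * (r ^ n * ∫ w, f w) := by rw [integral_const_mul, hIg]
  -- algebra
  have h4 : (0 : ℝ) < 4 ^ n := by positivity
  have hrn : (0 : ℝ) < r ^ n := by positivity
  rw [le_div_iff₀ hV0]
  calc (∑ x ∈ S, phiKer n s r (x - y)) * V0
      = ((∑ x ∈ S, phiKer n s r (x - y)) * ((r / 4) ^ n * V0)) * (4 ^ n / r ^ n) := by
        rw [div_pow]; field_simp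
    _ ≤ ((3 : ℝ) ^ s * (r ^ n * ∫ w, f w)) * (4 ^ n / r ^ n) :=
        mul_le_mul_of_nonneg_right hsum (by positivity)
    _ = (3 : ℝ) ^ s * 4 ^ n * ∫ w, f w := by field_simp

theorem stmt_8 (n : ℕ) (hn : 1 ≤ n) (s : ℝ) (hs : (n : ℝ) < s) :
    ∃ c : ℝ, 0 < c ∧
      ∀ (E : Set (EuclideanSpace ℝ (Fin n))), E.Nonempty → IsCompact E →
        ∀ r : ℝ, 0 < r → ∀ γ : ℝ, 0 < γ →
          ∀ μ : Measure (EuclideanSpace ℝ (Fin n)), IsProbabilityMeasure μ → μ Eᶜ = 0 →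
            (∀ x ∈ E, γ ≤ ∫ y, phiKer n s r (x - y) ∂μ) →
            (coverNum E r : ℝ) ≤ c / γ := by
  classical
  set V := EuclideanSpace ℝ (Fin n)
  set c' : ℝ := (3 : ℝ) ^ s * 4 ^ n * (∫ w : V, (1 + ‖w‖) ^ (-s)) /
      (volume (ball (0 : V) 1)).toReal with hc'
  set c : ℝ := max c' 1 with hc
  refine ⟨c, lt_of_lt_of_le one_pos (le_max_right _ _), ?_⟩
  intro E _hEne _hEcomp r hr γ hγ μ hprob _hcomp hlow
  -- Core: any (r/2)-separated finite subset of E has cardinality at most c/γ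
  have hcore : ∀ S : Finset V, (↑S : Set V) ⊆ E →
      (∀ x ∈ S, ∀ x' ∈ S, x ≠ x' → r / 2 ≤ dist x x') → (S.card : ℝ) * γ ≤ c := by
    intro S hSE hsep
    have hint : ∀ x : V, Integrable (fun y => phiKer n s r (x - y)) μ := by
      intro x
      have hm : Measurable fun y => phiKer n s r (x - y) :=
        (phiKer_measurable n s r).comp (measurable_const.sub measurable_id)
      refine (integrable_const (1 : ℝ)).mono' hm.aestronglyMeasurable
        (ae_of_all _ fun y => ?_)
      rw [Real.norm_eq_abs, abs_of_nonneg (phiKer_nonneg n hr _)]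
      exact phiKer_le_one n s r _
    calc (S.card : ℝ) * γ = ∑ _x ∈ S, γ := by rw [Finset.sum_const, nsmul_eq_mul]
      _ ≤ ∑ x ∈ S, ∫ y, phiKer n s r (x - y) ∂μ :=
          Finset.sum_le_sum fun x hx => hlow x (hSE hx)
      _ = ∫ y, ∑ x ∈ S, phiKer n s r (x - y) ∂μ :=
          (integral_finset_sum S fun x _ => hint x).symm
      _ ≤ ∫ _y, c' ∂μ := by
          refine integral_mono (integrable_finset_sum S fun x _ => hint x)
            (integrable_const _) (fun y => ?_)
          exact sum_phiKer_le n hn hs hr y S hsep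
      _ = c' := by simp [measure_univ]
      _ ≤ c := le_max_left _ _
  -- The family of cardinalities of separated subsets of E
  set K : Set ℕ := {k | ∃ S : Finset V, (↑S : Set V) ⊆ E ∧
      (∀ x ∈ S, ∀ x' ∈ S, x ≠ x' → r / 2 ≤ dist x x') ∧ S.card = k} with hK
  have hKne : K.Nonempty := ⟨0, ∅, by simp, by simp, rfl⟩
  have hKbdd : BddAbove K := by
    refine ⟨Nat.ceil (c / γ), fun k hk => ?_⟩
    obtain ⟨S, hSE, hsep, hcard⟩ := hk
    have h1 : (k : ℝ) ≤ c / γ := by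
      rw [le_div_iff₀ hγ]
      rw [← hcard]
      exact hcore S hSE hsep
    exact_mod_cast h1.trans (Nat.le_ceil _)
  set k₀ := sSup K with hk₀def
  have hk₀K : k₀ ∈ K := Nat.sSup_mem hKne hKbdd
  obtain ⟨S, hSE, hsep, hcard⟩ := hk₀K
  -- maximality gives covering
  have hcover : ∀ y ∈ E, ∃ x ∈ S, dist y x ≤ r / 2 := by
    intro y hy
    by_contra hyn
    push_neg at hyn
    have hyS : y ∉ S := by
      intro h
      have h2 := hyn y h
      rw [dist_self] at h2
      linarith
    have hmem : (insert y S).card ∈ K := by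
      refine ⟨insert y S, ?_, ?_, rfl⟩
      · intro z hz
        rcases Finset.mem_insert.1 hz with h | h
        · exact h ▸ hy
        · exact hSE h
      · intro a ha b hb hab
        rcases Finset.mem_insert.1 ha with ha' | ha' <;>
          rcases Finset.mem_insert.1 hb with hb' | hb'
        · exact absurd (ha'.trans hb'.symm) hab
        · subst ha'; exact (hyn b hb').le
        · subst hb'; rw [dist_comm]; exact (hyn a ha').le
        · exact hsep a ha' b hb' hab
    have hle : (insert y S).card ≤ k₀ := le_csSup hKbdd hmem
    rw [Finset.card_insert_of_notMem hyS, hcard] at hle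
    omega
  -- coverNum is at most the cardinality of the image family of closed balls
  have h1 : coverNum E r ≤ (S.image fun x => closedBall x (r / 2)).card := by
    apply Nat.sInf_le
    refine ⟨S.image fun x => closedBall x (r / 2), rfl, ?_, ?_⟩
    · intro A hA
      obtain ⟨x, _, rfl⟩ := Finset.mem_image.1 hA
      calc diam (closedBall x (r / 2)) ≤ 2 * (r / 2) := diam_closedBall (by positivity)
        _ = r := by ring
    · intro y hy
      obtain ⟨x, hxS, hxy⟩ := hcover y hy
      refine ⟨closedBall x (r / 2), ?_, mem_closedBall.2 hxy⟩
      simp only [Finset.coe_image, Set.mem_image]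
      exact ⟨x, hxS, rfl⟩
  have h2 : (S.image fun x => closedBall x (r / 2)).card ≤ k₀ :=
    hcard ▸ Finset.card_image_le
  have h3 : (k₀ : ℝ) ≤ c / γ := by
    rw [le_div_iff₀ hγ, ← hcard]
    exact hcore S hSE hsep
  calc (coverNum E r : ℝ) ≤ (k₀ : ℝ) := by exact_mod_cast h1.trans h2
    _ ≤ c / γ := h3
end

section
/- For 0 < s < n there exist constants c₁, c₂ > 0 depending only on n and s such that c₁ ψ_1^s(x) ≤ min{1, |x|^{−s}} ≤ c₂ ψ_1^s(x) for all x ∈ ℝ^n, where ψ_1^s(x) = ∫_{ℝ^n} |y|^{−s} exp(−|x−y|²/2) dy. -/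
open MeasureTheory Metric Classical
open scoped ENNReal

/-- The kernel φ_1^s(x) = min{1, |x|^{-s}}, with value 1 at x = 0. -/
noncomputable def phiOne (n : ℕ) (s : ℝ) (x : EuclideanSpace ℝ (Fin n)) : ℝ :=
  if x = 0 then 1 else min 1 (‖x‖ ^ (-s))

/-- The kernel ψ_1^s(x) = ∫ |y|^{-s} exp(-|x - y|²/2) dy. -/
noncomputable def psiOne (n : ℕ) (s : ℝ) (x : EuclideanSpace ℝ (Fin n)) : ℝ :=
  ∫ y : EuclideanSpace ℝ (Fin n), ‖y‖ ^ (-s) * Real.exp (-‖x - y‖ ^ 2 / 2)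

section Aux

variable {n : ℕ} {s : ℝ}

local notation "E" => EuclideanSpace ℝ (Fin n)

lemma meas_rpow : Measurable (fun y : E => ‖y‖ ^ (-s)) := measurable_norm.pow_const _

/-- Integrability of ‖y‖^{-s} on the unit ball. -/
lemma intOn_rpow_unitBall (hn : 1 ≤ n) (hs : 0 < s) (hsn : s < n) :
    IntegrableOn (fun y : E => ‖y‖ ^ (-s)) (ball 0 1) volume := by
  haveI : Nonempty (Fin n) := Fin.pos_iff_nonempty.1 hn
  haveI : Nontrivial E := inferInstance
  refine ⟨meas_rpow.aestronglyMeasurable.restrict, ?_⟩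
  rw [hasFiniteIntegral_iff_norm]
  set A : ℕ → Set E :=
    fun k => {y | (2:ℝ)^(-(k:ℝ)-1) ≤ ‖y‖} ∩ ball 0 ((2:ℝ)^(-(k:ℝ))) with hA
  have hsub : ball (0 : E) 1 ⊆ {0} ∪ ⋃ k, A k := by
    intro y hy
    rcases eq_or_ne y 0 with rfl | hy0
    · exact Set.mem_union_left _ rfl
    have hy0' : 0 < ‖y‖ := norm_pos_iff.2 hy0
    have hex : ∃ m : ℕ, (2:ℝ)^(-(m:ℝ)-1) ≤ ‖y‖ := by
      obtain ⟨m, hm⟩ := pow_unbounded_of_one_lt (‖y‖⁻¹) (by norm_num : (1:ℝ) < 2)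
      refine ⟨m, ?_⟩
      have h1 : (2:ℝ)^(-(m:ℝ)-1) ≤ (2:ℝ)^(-(m:ℝ)) := by
        apply Real.rpow_le_rpow_of_exponent_le (by norm_num); linarith
      have h2 : (2:ℝ)^(-(m:ℝ)) = ((2:ℝ)^m)⁻¹ := by
        rw [Real.rpow_neg (by norm_num), Real.rpow_natCast]
      have : ((2:ℝ)^m)⁻¹ ≤ ‖y‖ := by
        rw [inv_le_comm₀ (by positivity) hy0']
        exact hm.le
      linarith [h1, h2 ▸ this]
    let k := Nat.find hex
    refine Set.mem_union_right _ (Set.mem_iUnion.2 ⟨k, Nat.find_spec hex, ?_⟩)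
    simp only [mem_ball, dist_zero_right]
    rcases Nat.eq_zero_or_pos k with hk | hk
    · rw [hk]; simpa using (mem_ball_zero_iff.1 hy)
    · have := Nat.find_min hex (Nat.sub_lt hk one_pos)
      push_neg at this
      have hke : (-((k-1 : ℕ):ℝ)-1) = -(k:ℝ) := by
        have h1 : (1:ℕ) ≤ k := hk
        push_cast [Nat.cast_sub h1]; ring
      rw [hke] at this
      exact this
  set V := volume (ball (0 : E) 1) with hV
  have hVlt : V < ⊤ := measure_ball_lt_top
  set r : ℝ≥0∞ := ENNReal.ofReal ((2:ℝ)^(s - n)) with hr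
  have hrlt : r < 1 := by
    rw [hr, ← ENNReal.ofReal_one]
    exact ENNReal.ofReal_lt_ofReal_iff_of_nonneg (by positivity) |>.2
      (Real.rpow_lt_one_of_one_lt_of_neg (by norm_num) (by linarith))
  have hkey : ∀ k : ℕ, ∫⁻ y in A k, ENNReal.ofReal ‖‖y‖ ^ (-s)‖
      ≤ (ENNReal.ofReal ((2:ℝ)^s) * V) * r ^ k := by
    intro k
    have hb : (0:ℝ) < (2:ℝ)^(-(k:ℝ)-1) := by positivity
    have hbd : ∀ y ∈ A k, ENNReal.ofReal ‖‖y‖ ^ (-s)‖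
        ≤ ENNReal.ofReal (((2:ℝ)^(-(k:ℝ)-1)) ^ (-s)) := by
      intro y hy
      apply ENNReal.ofReal_le_ofReal
      rw [Real.norm_of_nonneg (Real.rpow_nonneg (norm_nonneg _) _)]
      exact Real.rpow_le_rpow_of_nonpos hb hy.1 (by linarith)
    calc ∫⁻ y in A k, ENNReal.ofReal ‖‖y‖ ^ (-s)‖
        ≤ ∫⁻ _ in A k, ENNReal.ofReal (((2:ℝ)^(-(k:ℝ)-1)) ^ (-s)) := by
          apply setLIntegral_mono' ?_ hbd
          exact (measurableSet_le measurable_const measurable_norm).inter measurableSet_ball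
      _ = ENNReal.ofReal (((2:ℝ)^(-(k:ℝ)-1)) ^ (-s)) * volume (A k) := by
          rw [setLIntegral_const]
      _ ≤ ENNReal.ofReal (((2:ℝ)^(-(k:ℝ)-1)) ^ (-s)) *
            (ENNReal.ofReal (((2:ℝ)^(-(k:ℝ))) ^ n) * V) := by
          gcongr
          calc volume (A k) ≤ volume (ball (0 : E) ((2:ℝ)^(-(k:ℝ)))) :=
                measure_mono Set.inter_subset_right
            _ = ENNReal.ofReal (((2:ℝ)^(-(k:ℝ))) ^ n) * V := by
                rw [Measure.addHaar_ball volume 0 (by positivity : (0:ℝ) ≤ (2:ℝ)^(-(k:ℝ)))]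
                congr 2
                simp [finrank_euclideanSpace]
      _ = (ENNReal.ofReal ((2:ℝ)^s) * V) * r ^ k := by
          rw [← mul_assoc, ← ENNReal.ofReal_mul (by positivity), hr,
            ← ENNReal.ofReal_pow (by positivity), mul_right_comm,
            ← ENNReal.ofReal_mul (by positivity)]
          congr 2
          rw [← Real.rpow_natCast ((2:ℝ)^(s-(n:ℝ))) k, ← Real.rpow_mul (by norm_num),
            ← Real.rpow_natCast ((2:ℝ)^(-(k:ℝ))) n, ← Real.rpow_mul (by norm_num),
            ← Real.rpow_mul (by norm_num), ← Real.rpow_add (by norm_num),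
            ← Real.rpow_add (by norm_num)]
          ring_nf
  calc ∫⁻ y in ball (0 : E) 1, ENNReal.ofReal ‖‖y‖ ^ (-s)‖
      ≤ ∫⁻ y in ({0} ∪ ⋃ k, A k : Set E),
          ENNReal.ofReal ‖‖y‖ ^ (-s)‖ := lintegral_mono_set hsub
    _ ≤ (∫⁻ y in ({0} : Set E), ENNReal.ofReal ‖‖y‖ ^ (-s)‖)
          + ∫⁻ y in (⋃ k, A k), ENNReal.ofReal ‖‖y‖ ^ (-s)‖ := lintegral_union_le _ _ _
    _ ≤ 0 + ∑' k, ∫⁻ y in A k, ENNReal.ofReal ‖‖y‖ ^ (-s)‖ := by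
        gcongr
        · exact le_of_eq (setLIntegral_measure_zero _ _ (measure_singleton 0))
        · exact lintegral_iUnion_le _ _
    _ ≤ 0 + ∑' k, (ENNReal.ofReal ((2:ℝ)^s) * V) * r ^ k := by
        gcongr with k
        exact hkey k
    _ = (ENNReal.ofReal ((2:ℝ)^s) * V) * (1 - r)⁻¹ := by
        rw [zero_add, ENNReal.tsum_mul_left, ENNReal.tsum_geometric]
    _ < ⊤ := by
        apply ENNReal.mul_lt_top (ENNReal.mul_lt_top ENNReal.ofReal_lt_top hVlt)
        exact ENNReal.inv_lt_top.2 (tsub_pos_of_lt hrlt)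

/-- Integrability of ‖y‖^{-s} on any ball. -/
lemma intOn_rpow_ball (hn : 1 ≤ n) (hs : 0 < s) (hsn : s < n) (R : ℝ) :
    IntegrableOn (fun y : E => ‖y‖ ^ (-s)) (ball 0 R) volume := by
  have h1 := intOn_rpow_unitBall (n := n) hn hs hsn
  have hcover : ball (0 : E) R ⊆ ball 0 1 ∪ (ball 0 R \ ball 0 1) := by
    intro y hy
    by_cases h : y ∈ ball (0 : E) 1
    · exact Or.inl h
    · exact Or.inr ⟨hy, h⟩
  refine IntegrableOn.mono_set (IntegrableOn.union h1 ?_) hcover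
  have hfin : volume (ball (0 : E) R \ ball 0 1) < ⊤ :=
    lt_of_le_of_lt (measure_mono Set.diff_subset) measure_ball_lt_top
  have hconst : IntegrableOn (fun _ : E => (1:ℝ)) (ball 0 R \ ball 0 1) volume :=
    integrableOn_const hfin.ne
  refine Integrable.mono' hconst meas_rpow.aestronglyMeasurable.restrict ?_
  filter_upwards [ae_restrict_mem (measurableSet_ball.diff measurableSet_ball)] with y hy
  rw [Real.norm_of_nonneg (Real.rpow_nonneg (norm_nonneg _) _)]
  have h1y : 1 ≤ ‖y‖ := by simpa using hy.2
  exact Real.rpow_le_one_of_one_le_of_nonpos h1y (by linarith)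

/-- Integrability of the shifted Gaussian. -/
lemma gauss_int (x : E) :
    Integrable (fun y : E => Real.exp (-‖x - y‖ ^ 2 / 2)) := by
  have h := (GaussianFourier.integrable_cexp_neg_mul_sq_norm_add (b := (1/2 : ℂ)) (by norm_num) 0
    (0 : E)).norm
  have h2 : Integrable (fun v : E => Real.exp (-‖v‖ ^ 2 / 2)) := by
    convert h using 2 with v
    rw [Complex.norm_exp]
    congr 1
    simp [← Complex.ofReal_pow]
    ring
  simpa using h2.comp_sub_left x

lemma integrand_meas (x : E) :
    Measurable (fun y : E => ‖y‖ ^ (-s) * Real.exp (-‖x - y‖ ^ 2 / 2)) := by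
  apply meas_rpow.mul
  exact (Real.continuous_exp.comp (by fun_prop)).measurable

lemma integrand_nonneg (x y : E) :
    0 ≤ ‖y‖ ^ (-s) * Real.exp (-‖x - y‖ ^ 2 / 2) := by positivity

/-- Integrability of the full integrand. -/
lemma integrand_int (hn : 1 ≤ n) (hs : 0 < s) (hsn : s < n) (x : E) :
    Integrable (fun y : E => ‖y‖ ^ (-s) * Real.exp (-‖x - y‖ ^ 2 / 2)) := by
  rw [← integrableOn_univ, ← Set.union_compl_self (ball (0 : E) 1)]
  apply IntegrableOn.union
  · refine Integrable.mono' (intOn_rpow_unitBall hn hs hsn)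
      (integrand_meas x).aestronglyMeasurable.restrict ?_
    filter_upwards with y
    rw [Real.norm_of_nonneg (integrand_nonneg x y)]
    exact mul_le_of_le_one_right (Real.rpow_nonneg (norm_nonneg _) _) (Real.exp_le_one_iff.2
      (by nlinarith [sq_nonneg ‖x - y‖]))
  · refine Integrable.mono' ((gauss_int x).integrableOn)
      (integrand_meas x).aestronglyMeasurable.restrict ?_
    filter_upwards [ae_restrict_mem measurableSet_ball.compl] with y hy
    rw [Real.norm_of_nonneg (integrand_nonneg x y)]
    have h1y : 1 ≤ ‖y‖ := by simpa using hy
    have : ‖y‖ ^ (-s) ≤ 1 := Real.rpow_le_one_of_one_le_of_nonpos h1y (by linarith)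
    nlinarith [Real.exp_pos (-‖x - y‖ ^ 2 / 2), Real.rpow_nonneg (norm_nonneg y) (-s)]

lemma psi_nonneg (x : E) : 0 ≤ psiOne n s x :=
  integral_nonneg (fun y => integrand_nonneg x y)

lemma psi_lower (hn : 1 ≤ n) (hs : 0 < s) (hsn : s < n) (x : E) (c : ℝ) (hc : 0 ≤ c)
    (hbd : ∀ y : E, y ≠ 0 → y ∈ ball x 1 → c ≤ ‖y‖ ^ (-s)) :
    Real.exp (-2⁻¹) * c * (volume (ball (0:E) 1)).toReal ≤ psiOne n s x := by
  haveI : Nonempty (Fin n) := Fin.pos_iff_nonempty.1 hn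
  haveI : Nontrivial E := inferInstance
  set S : Set E := ball x 1 \ {0} with hS
  have hSm : MeasurableSet S := measurableSet_ball.diff (measurableSet_singleton _)
  have hvol : volume S = volume (ball (0:E) 1) := by
    rw [measure_diff_null (measure_singleton _), Measure.addHaar_ball_center]
  have hfin : volume S < ⊤ := by rw [hvol]; exact measure_ball_lt_top
  have hint := integrand_int hn hs hsn x
  calc Real.exp (-2⁻¹) * c * (volume (ball (0:E) 1)).toReal
      = ∫ _ in S, Real.exp (-2⁻¹) * c := by
        rw [setIntegral_const, measureReal_def, hvol, smul_eq_mul]; ring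
    _ ≤ ∫ y in S, ‖y‖ ^ (-s) * Real.exp (-‖x - y‖ ^ 2 / 2) := by
        refine setIntegral_mono_on (integrableOn_const hfin.ne)
          hint.integrableOn hSm ?_
        intro y hy
        have hy0 : y ≠ 0 := by simpa using hy.2
        have h1 : c ≤ ‖y‖ ^ (-s) := hbd y hy0 hy.1
        have hxy : ‖x - y‖ < 1 := by
          have := mem_ball.1 hy.1
          rwa [dist_eq_norm, norm_sub_rev] at this
        have h2 : Real.exp (-2⁻¹) ≤ Real.exp (-‖x - y‖ ^ 2 / 2) := by
          apply Real.exp_le_exp.2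
          nlinarith [norm_nonneg (x - y)]
        rw [mul_comm]
        exact mul_le_mul h1 h2 (Real.exp_pos _).le (Real.rpow_nonneg (norm_nonneg _) _)
    _ ≤ psiOne n s x :=
        setIntegral_le_integral hint (ae_of_all _ (integrand_nonneg x))

lemma psi_lower_near (hn : 1 ≤ n) (hs : 0 < s) (hsn : s < n) (x : E) (hx : ‖x‖ ≤ 2) :
    Real.exp (-2⁻¹) * (3:ℝ) ^ (-s) * (volume (ball (0:E) 1)).toReal ≤ psiOne n s x := by
  refine psi_lower hn hs hsn x _ (by positivity) ?_
  intro y hy0 hy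
  have h3 : ‖y‖ ≤ 3 := by
    have := mem_ball.1 hy
    rw [dist_eq_norm] at this
    calc ‖y‖ = ‖x + (y - x)‖ := by congr 1; abel
      _ ≤ ‖x‖ + ‖y - x‖ := norm_add_le _ _
      _ ≤ 3 := by linarith
  exact Real.rpow_le_rpow_of_nonpos (norm_pos_iff.2 hy0) h3 (by linarith)

lemma psi_lower_far (hn : 1 ≤ n) (hs : 0 < s) (hsn : s < n) (x : E) (hx : 2 ≤ ‖x‖) :
    Real.exp (-2⁻¹) * ((3/2:ℝ) ^ (-s) * ‖x‖ ^ (-s)) * (volume (ball (0:E) 1)).toReal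
      ≤ psiOne n s x := by
  refine psi_lower hn hs hsn x _ (by positivity) ?_
  intro y hy0 hy
  have hxpos : (0:ℝ) < ‖x‖ := by linarith
  have h3 : ‖y‖ ≤ 3/2 * ‖x‖ := by
    have := mem_ball.1 hy
    rw [dist_eq_norm] at this
    calc ‖y‖ = ‖x + (y - x)‖ := by congr 1; abel
      _ ≤ ‖x‖ + ‖y - x‖ := norm_add_le _ _
      _ ≤ 3/2 * ‖x‖ := by linarith
  calc (3/2:ℝ) ^ (-s) * ‖x‖ ^ (-s) = (3/2 * ‖x‖) ^ (-s) := by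
        rw [Real.mul_rpow (by norm_num) hxpos.le]
    _ ≤ ‖y‖ ^ (-s) :=
        Real.rpow_le_rpow_of_nonpos (norm_pos_iff.2 hy0) h3 (by linarith)

lemma gauss_translate (x : E) :
    ∫ y : E, Real.exp (-‖x - y‖ ^ 2 / 2) = ∫ z : E, Real.exp (-‖z‖ ^ 2 / 2) :=
  integral_sub_left_eq_self (fun z : E => Real.exp (-‖z‖ ^ 2 / 2)) volume x

lemma IG_pos : 0 < ∫ z : E, Real.exp (-‖z‖ ^ 2 / 2) := by
  have h := GaussianFourier.integral_rexp_neg_mul_sq_norm (V := E) (b := (1/2:ℝ)) one_half_pos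
  have he : (fun v : E => Real.exp (-(1/2:ℝ) * ‖v‖ ^ 2)) = fun v : E => Real.exp (-‖v‖ ^ 2 / 2) := by
    funext v; congr 1; ring
  rw [he] at h
  rw [h]
  positivity


lemma pow_le_fact_exp (m : ℕ) {u : ℝ} (hu : 0 ≤ u) : u ^ m ≤ m.factorial * Real.exp u := by
  have h := Real.sum_le_exp_of_nonneg hu (m + 1)
  have hterm : u ^ m / m.factorial ≤ ∑ i ∈ Finset.range (m+1), u ^ i / i.factorial := by
    refine Finset.single_le_sum (f := fun i => u ^ i / (i.factorial : ℝ)) ?_ ?_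
    · intro i _; positivity
    · exact Finset.self_mem_range_succ m
  have hfac : (0:ℝ) < m.factorial := by positivity
  rw [div_le_iff₀ hfac] at hterm
  calc u ^ m ≤ Real.exp u * m.factorial := le_trans hterm (by nlinarith [h])
    _ = m.factorial * Real.exp u := by ring

lemma elem1 (n m : ℕ) (s K V t : ℝ) (hK : 0 ≤ K) (hV : 0 ≤ V) (ht : 2 ≤ t)
    (hns : (n:ℝ) + s ≤ ((2*m : ℕ):ℝ)) (hs : 0 < s) :
    (K + (t/2) ^ n * V) * Real.exp (-t ^ 2 / 8)
      ≤ (8:ℝ) ^ m * m.factorial * (K + V) * t ^ (-s) := by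
  have ht1 : (1:ℝ) ≤ t := by linarith
  have ht0 : (0:ℝ) < t := by linarith
  have e1 : K + (t/2) ^ n * V ≤ (K + V) * t ^ n := by
    have h1 : (t/2) ^ n ≤ t ^ n := pow_le_pow_left₀ (by linarith) (by linarith) n
    have h2 : (1:ℝ) ≤ t ^ n := one_le_pow₀ ht1
    nlinarith
  have e2 : t ^ n * Real.exp (-t ^ 2 / 8) ≤ (8:ℝ) ^ m * m.factorial * t ^ (-s) := by
    have hts : t ^ n * t ^ s ≤ (8:ℝ) ^ m * m.factorial * Real.exp (t ^ 2 / 8) := by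
      calc t ^ n * t ^ s = t ^ ((n:ℝ) + s) := by
            rw [Real.rpow_add ht0, Real.rpow_natCast]
        _ ≤ t ^ (((2 * m : ℕ)):ℝ) := Real.rpow_le_rpow_of_exponent_le ht1 hns
        _ = (t ^ 2) ^ m := by rw [Real.rpow_natCast, pow_mul]
        _ = (8:ℝ) ^ m * (t ^ 2 / 8) ^ m := by
            rw [div_pow, ← mul_div_assoc, mul_comm, mul_div_assoc, div_self (by positivity), mul_one]
        _ ≤ (8:ℝ) ^ m * (m.factorial * Real.exp (t ^ 2 / 8)) := by
            gcongr
            exact pow_le_fact_exp m (by positivity)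
        _ = (8:ℝ) ^ m * m.factorial * Real.exp (t ^ 2 / 8) := by ring
    have hmul : t ^ s * t ^ (-s) = 1 := by
      rw [← Real.rpow_add ht0]; simp
    have hE : Real.exp (t ^ 2 / 8) * Real.exp (-t ^ 2 / 8) = 1 := by
      have hz : t ^ 2 / 8 + -t ^ 2 / 8 = 0 := by ring
      rw [← Real.exp_add, hz, Real.exp_zero]
    have hpos : (0:ℝ) ≤ t ^ (-s) * Real.exp (-t ^ 2 / 8) := by positivity
    have := mul_le_mul_of_nonneg_right hts hpos
    calc t ^ n * Real.exp (-t ^ 2 / 8)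
        = (t ^ n * t ^ s) * (t ^ (-s) * Real.exp (-t ^ 2 / 8)) := by
          rw [show (t ^ n * t ^ s) * (t ^ (-s) * Real.exp (-t ^ 2 / 8))
            = (t ^ s * t ^ (-s)) * (t ^ n * Real.exp (-t ^ 2 / 8)) from by ring, hmul, one_mul]
      _ ≤ ((8:ℝ) ^ m * m.factorial * Real.exp (t ^ 2 / 8)) * (t ^ (-s) * Real.exp (-t ^ 2 / 8)) := this
      _ = (8:ℝ) ^ m * m.factorial * t ^ (-s) := by
          rw [show ((8:ℝ) ^ m * ↑m.factorial * Real.exp (t ^ 2 / 8)) * (t ^ (-s) * Real.exp (-t ^ 2 / 8))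
            = (Real.exp (t ^ 2 / 8) * Real.exp (-t ^ 2 / 8)) * ((8:ℝ) ^ m * ↑m.factorial * t ^ (-s)) from by ring,
            hE, one_mul]
  calc (K + (t/2) ^ n * V) * Real.exp (-t ^ 2 / 8)
      ≤ ((K + V) * t ^ n) * Real.exp (-t ^ 2 / 8) :=
        mul_le_mul_of_nonneg_right e1 (Real.exp_pos _).le
    _ = (K + V) * (t ^ n * Real.exp (-t ^ 2 / 8)) := by ring
    _ ≤ (K + V) * ((8:ℝ) ^ m * m.factorial * t ^ (-s)) :=
        mul_le_mul_of_nonneg_left e2 (by positivity)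
    _ = (8:ℝ) ^ m * m.factorial * (K + V) * t ^ (-s) := by ring

lemma psi_upper_glob (hn : 1 ≤ n) (hs : 0 < s) (hsn : s < n) (x : E) :
    psiOne n s x ≤ (∫ y in ball (0:E) 1, ‖y‖ ^ (-s)) + ∫ z : E, Real.exp (-‖z‖ ^ 2 / 2) := by
  have hint := integrand_int hn hs hsn x
  rw [psiOne, ← integral_add_compl (measurableSet_ball (x := (0:E)) (ε := 1)) hint]
  apply add_le_add
  · refine setIntegral_mono_on hint.integrableOn
      (intOn_rpow_ball hn hs hsn 1) measurableSet_ball ?_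
    intro y _
    exact mul_le_of_le_one_right (Real.rpow_nonneg (norm_nonneg _) _)
      (Real.exp_le_one_iff.2 (by nlinarith [sq_nonneg ‖x - y‖]))
  · calc ∫ y in (ball (0:E) 1)ᶜ, ‖y‖ ^ (-s) * Real.exp (-‖x - y‖ ^ 2 / 2)
        ≤ ∫ y in (ball (0:E) 1)ᶜ, Real.exp (-‖x - y‖ ^ 2 / 2) := by
          refine setIntegral_mono_on hint.integrableOn
            (gauss_int x).integrableOn measurableSet_ball.compl ?_
          intro y hy
          have h1y : 1 ≤ ‖y‖ := by simpa using hy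
          have h1 : ‖y‖ ^ (-s) ≤ 1 :=
            Real.rpow_le_one_of_one_le_of_nonpos h1y (by linarith)
          nlinarith [Real.exp_pos (-‖x - y‖ ^ 2 / 2)]
      _ ≤ ∫ y : E, Real.exp (-‖x - y‖ ^ 2 / 2) :=
          setIntegral_le_integral (gauss_int x) (ae_of_all _ fun y => (Real.exp_pos _).le)
      _ = ∫ z : E, Real.exp (-‖z‖ ^ 2 / 2) := gauss_translate x

lemma psi_upper_far (hn : 1 ≤ n) (hs : 0 < s) (hsn : s < n) (x : E) (hx : 2 ≤ ‖x‖) :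
    psiOne n s x ≤
      ((8:ℝ) ^ (n + ⌈s⌉₊) * (n + ⌈s⌉₊).factorial *
        ((∫ y in ball (0:E) 1, ‖y‖ ^ (-s)) + (volume (ball (0:E) 1)).toReal)
       + (2:ℝ) ^ s * ∫ z : E, Real.exp (-‖z‖ ^ 2 / 2)) * ‖x‖ ^ (-s) := by
  haveI : Nonempty (Fin n) := Fin.pos_iff_nonempty.1 hn
  haveI : Nontrivial E := inferInstance
  have ht0 : (0:ℝ) < ‖x‖ := by linarith
  have hR1 : (1:ℝ) ≤ ‖x‖ / 2 := by linarith
  have hR0 : (0:ℝ) < ‖x‖ / 2 := by linarith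
  have hK₀0 : 0 ≤ ∫ y in ball (0:E) 1, ‖y‖ ^ (-s) :=
    setIntegral_nonneg measurableSet_ball fun y _ => Real.rpow_nonneg (norm_nonneg _) _
  have hV0 : (0:ℝ) ≤ (volume (ball (0:E) 1)).toReal := ENNReal.toReal_nonneg
  have hint := integrand_int hn hs hsn x
  have hsplit : psiOne n s x
      = (∫ y in ball (0:E) (‖x‖/2), ‖y‖ ^ (-s) * Real.exp (-‖x - y‖ ^ 2 / 2))
        + ∫ y in (ball (0:E) (‖x‖/2))ᶜ, ‖y‖ ^ (-s) * Real.exp (-‖x - y‖ ^ 2 / 2) := by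
    rw [psiOne, ← integral_add_compl (measurableSet_ball (x := (0:E)) (ε := ‖x‖/2)) hint]
  -- inner estimate
  have hinner : (∫ y in ball (0:E) (‖x‖/2), ‖y‖ ^ (-s) * Real.exp (-‖x - y‖ ^ 2 / 2))
      ≤ ((∫ y in ball (0:E) 1, ‖y‖ ^ (-s)) + (‖x‖/2) ^ n * (volume (ball (0:E) 1)).toReal)
        * Real.exp (-‖x‖ ^ 2 / 8) := by
    have step1 : (∫ y in ball (0:E) (‖x‖/2), ‖y‖ ^ (-s) * Real.exp (-‖x - y‖ ^ 2 / 2))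
        ≤ ∫ y in ball (0:E) (‖x‖/2), ‖y‖ ^ (-s) * Real.exp (-‖x‖ ^ 2 / 8) := by
      refine setIntegral_mono_on hint.integrableOn
        ((intOn_rpow_ball hn hs hsn (‖x‖/2)).mul_const _) measurableSet_ball ?_
      intro y hy
      have hyR : ‖y‖ < ‖x‖/2 := by simpa using hy
      have hd : ‖x‖/2 ≤ ‖x - y‖ := by
        have := norm_sub_norm_le x y
        linarith
      refine mul_le_mul_of_nonneg_left ?_ (Real.rpow_nonneg (norm_nonneg _) _)
      apply Real.exp_le_exp.2
      nlinarith [norm_nonneg (x - y)]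
    have step2 : (∫ y in ball (0:E) (‖x‖/2), ‖y‖ ^ (-s))
        ≤ (∫ y in ball (0:E) 1, ‖y‖ ^ (-s))
          + (‖x‖/2) ^ n * (volume (ball (0:E) 1)).toReal := by
      have hcup : ball (0:E) (‖x‖/2) = ball 0 1 ∪ (ball 0 (‖x‖/2) \ ball 0 1) :=
        (Set.union_diff_cancel (ball_subset_ball hR1)).symm
      rw [hcup, setIntegral_union Set.disjoint_sdiff_right
        (measurableSet_ball.diff measurableSet_ball)
        (intOn_rpow_ball hn hs hsn 1)
        ((intOn_rpow_ball hn hs hsn (‖x‖/2)).mono_set Set.diff_subset)]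
      gcongr
      have hfin : volume (ball (0:E) (‖x‖/2) \ ball 0 1) < ⊤ :=
        lt_of_le_of_lt (measure_mono Set.diff_subset) measure_ball_lt_top
      calc (∫ y in ball (0:E) (‖x‖/2) \ ball 0 1, ‖y‖ ^ (-s))
          ≤ ∫ _ in ball (0:E) (‖x‖/2) \ ball 0 1, (1:ℝ) := by
            refine setIntegral_mono_on
              ((intOn_rpow_ball hn hs hsn (‖x‖/2)).mono_set Set.diff_subset)
              (integrableOn_const hfin.ne)
              (measurableSet_ball.diff measurableSet_ball) ?_
            intro y hy
            have h1y : 1 ≤ ‖y‖ := by simpa using hy.2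
            exact Real.rpow_le_one_of_one_le_of_nonpos h1y (by linarith)
        _ = (volume (ball (0:E) (‖x‖/2) \ ball 0 1)).toReal := by
            rw [setIntegral_const, smul_eq_mul, mul_one, measureReal_def]
        _ ≤ (volume (ball (0:E) (‖x‖/2))).toReal := by
            apply ENNReal.toReal_mono measure_ball_lt_top.ne
            exact measure_mono Set.diff_subset
        _ = (‖x‖/2) ^ n * (volume (ball (0:E) 1)).toReal := by
            rw [Measure.addHaar_ball volume 0 hR0.le, ENNReal.toReal_mul,
              ENNReal.toReal_ofReal (by positivity), finrank_euclideanSpace, Fintype.card_fin]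
    calc (∫ y in ball (0:E) (‖x‖/2), ‖y‖ ^ (-s) * Real.exp (-‖x - y‖ ^ 2 / 2))
        ≤ ∫ y in ball (0:E) (‖x‖/2), ‖y‖ ^ (-s) * Real.exp (-‖x‖ ^ 2 / 8) := step1
      _ = (∫ y in ball (0:E) (‖x‖/2), ‖y‖ ^ (-s)) * Real.exp (-‖x‖ ^ 2 / 8) := by
          rw [integral_mul_const]
      _ ≤ ((∫ y in ball (0:E) 1, ‖y‖ ^ (-s)) + (‖x‖/2) ^ n * (volume (ball (0:E) 1)).toReal)
            * Real.exp (-‖x‖ ^ 2 / 8) :=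
          mul_le_mul_of_nonneg_right step2 (Real.exp_pos _).le
  have hns : ((n:ℝ) + s) ≤ ((2 * (n + ⌈s⌉₊) : ℕ) : ℝ) := by
    have h1 : s ≤ (⌈s⌉₊ : ℝ) := Nat.le_ceil s
    have hn0 : (0:ℝ) ≤ n := Nat.cast_nonneg n
    have hc0 : (0:ℝ) ≤ (⌈s⌉₊ : ℝ) := Nat.cast_nonneg _
    push_cast
    linarith
  have helem := elem1 n (n + ⌈s⌉₊) s (∫ y in ball (0:E) 1, ‖y‖ ^ (-s))
    (volume (ball (0:E) 1)).toReal ‖x‖ hK₀0 hV0 hx hns hs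
  -- outer estimate
  have houter : (∫ y in (ball (0:E) (‖x‖/2))ᶜ, ‖y‖ ^ (-s) * Real.exp (-‖x - y‖ ^ 2 / 2))
      ≤ (2:ℝ) ^ s * (∫ z : E, Real.exp (-‖z‖ ^ 2 / 2)) * ‖x‖ ^ (-s) := by
    have hRs : (‖x‖/2) ^ (-s) = (2:ℝ) ^ s * ‖x‖ ^ (-s) := by
      rw [div_eq_mul_inv, Real.mul_rpow ht0.le (by norm_num),
        Real.inv_rpow (by norm_num), ← Real.rpow_neg (by norm_num), neg_neg, mul_comm]
    calc (∫ y in (ball (0:E) (‖x‖/2))ᶜ, ‖y‖ ^ (-s) * Real.exp (-‖x - y‖ ^ 2 / 2))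
        ≤ ∫ y in (ball (0:E) (‖x‖/2))ᶜ, (‖x‖/2) ^ (-s) * Real.exp (-‖x - y‖ ^ 2 / 2) := by
          refine setIntegral_mono_on hint.integrableOn
            ((gauss_int x).const_mul _).integrableOn measurableSet_ball.compl ?_
          intro y hy
          have hRy : ‖x‖/2 ≤ ‖y‖ := by simpa using hy
          exact mul_le_mul_of_nonneg_right
            (Real.rpow_le_rpow_of_nonpos hR0 hRy (by linarith)) (Real.exp_pos _).le
      _ ≤ ∫ y : E, (‖x‖/2) ^ (-s) * Real.exp (-‖x - y‖ ^ 2 / 2) :=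
          setIntegral_le_integral ((gauss_int x).const_mul _)
            (ae_of_all _ fun y => by positivity)
      _ = (‖x‖/2) ^ (-s) * ∫ z : E, Real.exp (-‖z‖ ^ 2 / 2) := by
          rw [integral_const_mul, gauss_translate]
      _ = (2:ℝ) ^ s * (∫ z : E, Real.exp (-‖z‖ ^ 2 / 2)) * ‖x‖ ^ (-s) := by
          rw [hRs]; ring
  rw [hsplit]
  calc (∫ y in ball (0:E) (‖x‖/2), ‖y‖ ^ (-s) * Real.exp (-‖x - y‖ ^ 2 / 2))
        + ∫ y in (ball (0:E) (‖x‖/2))ᶜ, ‖y‖ ^ (-s) * Real.exp (-‖x - y‖ ^ 2 / 2)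
      ≤ (8:ℝ) ^ (n + ⌈s⌉₊) * (n + ⌈s⌉₊).factorial *
          ((∫ y in ball (0:E) 1, ‖y‖ ^ (-s)) + (volume (ball (0:E) 1)).toReal) * ‖x‖ ^ (-s)
        + (2:ℝ) ^ s * (∫ z : E, Real.exp (-‖z‖ ^ 2 / 2)) * ‖x‖ ^ (-s) :=
        add_le_add (le_trans hinner helem) houter
    _ = ((8:ℝ) ^ (n + ⌈s⌉₊) * (n + ⌈s⌉₊).factorial *
          ((∫ y in ball (0:E) 1, ‖y‖ ^ (-s)) + (volume (ball (0:E) 1)).toReal)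
         + (2:ℝ) ^ s * ∫ z : E, Real.exp (-‖z‖ ^ 2 / 2)) * ‖x‖ ^ (-s) := by ring

end Aux

theorem stmt_13 (n : ℕ) (hn : 1 ≤ n) (s : ℝ) (hs : 0 < s) (hsn : s < n) :
    ∃ c₁ c₂ : ℝ, 0 < c₁ ∧ 0 < c₂ ∧
      ∀ x : EuclideanSpace ℝ (Fin n),
        c₁ * psiOne n s x ≤ phiOne n s x ∧ phiOne n s x ≤ c₂ * psiOne n s x := by
  haveI : Nonempty (Fin n) := Fin.pos_iff_nonempty.1 hn
  haveI : Nontrivial (EuclideanSpace ℝ (Fin n)) := inferInstance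
  set K₀ : ℝ := ∫ y in ball (0 : EuclideanSpace ℝ (Fin n)) 1, ‖y‖ ^ (-s) with hK₀
  set IG : ℝ := ∫ z : EuclideanSpace ℝ (Fin n), Real.exp (-‖z‖ ^ 2 / 2) with hIG
  set V : ℝ := (volume (ball (0 : EuclideanSpace ℝ (Fin n)) 1)).toReal with hV
  have hK₀0 : 0 ≤ K₀ :=
    setIntegral_nonneg measurableSet_ball fun y _ => Real.rpow_nonneg (norm_nonneg _) _
  have hIG0 : 0 < IG := IG_pos
  have hV0 : 0 < V :=
    ENNReal.toReal_pos (measure_ball_pos volume _ one_pos).ne' measure_ball_lt_top.ne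
  have hKIG : 0 < K₀ + IG := by linarith
  set A : ℝ := (8:ℝ) ^ (n + ⌈s⌉₊) * (n + ⌈s⌉₊).factorial * (K₀ + V) + (2:ℝ) ^ s * IG with hA
  have hA0 : 0 < A := by
    have h1 : (0:ℝ) < (8:ℝ) ^ (n + ⌈s⌉₊) * (n + ⌈s⌉₊).factorial * (K₀ + V) := by positivity
    have h2 : (0:ℝ) < (2:ℝ) ^ s * IG := by positivity
    linarith
  refine ⟨min ((2:ℝ) ^ (-s) / (K₀ + IG)) (1 / A), Real.exp 2⁻¹ * (3:ℝ) ^ s / V,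
    lt_min (div_pos (Real.rpow_pos_of_pos two_pos _) hKIG) (one_div_pos.2 hA0),
    div_pos (by positivity) hV0, ?_⟩
  intro x
  have hψ0 : 0 ≤ psiOne n s x := psi_nonneg x
  have hglob : psiOne n s x ≤ K₀ + IG := by
    have h := psi_upper_glob hn hs hsn x
    rw [← hK₀, ← hIG] at h; exact h
  have hfar' : 2 ≤ ‖x‖ → psiOne n s x ≤ A * ‖x‖ ^ (-s) := by
    intro hx2
    have h := psi_upper_far hn hs hsn x hx2
    rw [← hK₀, ← hIG, ← hV, ← hA] at h; exact h
  have hnear' : ‖x‖ ≤ 2 → Real.exp (-2⁻¹) * (3:ℝ) ^ (-s) * V ≤ psiOne n s x := by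
    intro hx2
    have h := psi_lower_near hn hs hsn x hx2
    rw [← hV] at h; exact h
  have hlowfar' : 2 ≤ ‖x‖ →
      Real.exp (-2⁻¹) * ((3/2:ℝ) ^ (-s) * ‖x‖ ^ (-s)) * V ≤ psiOne n s x := by
    intro hx2
    have h := psi_lower_far hn hs hsn x hx2
    rw [← hV] at h; exact h
  have hc₂0 : 0 ≤ Real.exp 2⁻¹ * (3:ℝ) ^ s / V := (div_pos (by positivity) hV0).le
  have hVne : V ≠ 0 := hV0.ne'
  have hEE : Real.exp 2⁻¹ * Real.exp (-2⁻¹) = 1 := by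
    rw [← Real.exp_add]; simp
  by_cases hx : ‖x‖ ≤ 2
  · constructor
    · calc min ((2:ℝ) ^ (-s) / (K₀ + IG)) (1 / A) * psiOne n s x
          ≤ ((2:ℝ) ^ (-s) / (K₀ + IG)) * psiOne n s x :=
            mul_le_mul_of_nonneg_right (min_le_left _ _) hψ0
        _ ≤ ((2:ℝ) ^ (-s) / (K₀ + IG)) * (K₀ + IG) :=
            mul_le_mul_of_nonneg_left hglob (div_pos (Real.rpow_pos_of_pos two_pos _) hKIG).le
        _ = (2:ℝ) ^ (-s) := div_mul_cancel₀ _ hKIG.ne'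
        _ ≤ phiOne n s x := by
            rw [phiOne]
            split
            · exact Real.rpow_le_one_of_one_le_of_nonpos (by norm_num) (by linarith)
            · refine le_min (Real.rpow_le_one_of_one_le_of_nonpos (by norm_num) (by linarith)) ?_
              have hx0 : 0 < ‖x‖ := norm_pos_iff.2 (by assumption)
              exact Real.rpow_le_rpow_of_nonpos hx0 hx (by linarith)
    · have h33 : (3:ℝ) ^ s * (3:ℝ) ^ (-s) = 1 := by
        rw [← Real.rpow_add (by norm_num)]; simp
      calc phiOne n s x ≤ 1 := by
            rw [phiOne]; split
            · exact le_rfl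
            · exact min_le_left _ _
        _ = (Real.exp 2⁻¹ * (3:ℝ) ^ s / V) * (Real.exp (-2⁻¹) * (3:ℝ) ^ (-s) * V) := by
            rw [show (Real.exp 2⁻¹ * (3:ℝ) ^ s / V) * (Real.exp (-2⁻¹) * (3:ℝ) ^ (-s) * V)
              = (Real.exp 2⁻¹ * Real.exp (-2⁻¹)) * ((3:ℝ) ^ s * (3:ℝ) ^ (-s)) * (V / V) from by
                ring, hEE, h33, div_self hVne]
            norm_num
        _ ≤ (Real.exp 2⁻¹ * (3:ℝ) ^ s / V) * psiOne n s x :=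
            mul_le_mul_of_nonneg_left (hnear' hx) hc₂0
  · push_neg at hx
    have hx2 : 2 ≤ ‖x‖ := hx.le
    have hx0 : 0 < ‖x‖ := by linarith
    have hxne : x ≠ 0 := by
      intro h; rw [h] at hx0; simp at hx0
    have hphi : phiOne n s x = ‖x‖ ^ (-s) := by
      rw [phiOne, if_neg hxne, min_eq_right]
      exact Real.rpow_le_one_of_one_le_of_nonpos (by linarith) (by linarith)
    constructor
    · calc min ((2:ℝ) ^ (-s) / (K₀ + IG)) (1 / A) * psiOne n s x
          ≤ (1 / A) * psiOne n s x := mul_le_mul_of_nonneg_right (min_le_right _ _) hψ0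
        _ ≤ (1 / A) * (A * ‖x‖ ^ (-s)) :=
            mul_le_mul_of_nonneg_left (hfar' hx2) (one_div_pos.2 hA0).le
        _ = ‖x‖ ^ (-s) := by rw [one_div, inv_mul_cancel_left₀ hA0.ne']
        _ = phiOne n s x := hphi.symm
    · have h32 : (3:ℝ) ^ s * (3/2:ℝ) ^ (-s) = (2:ℝ) ^ s := by
        rw [Real.rpow_neg (by norm_num), Real.div_rpow (by norm_num) (by norm_num)]
        rw [show ((3:ℝ)^s / (2:ℝ)^s)⁻¹ = (2:ℝ)^s / (3:ℝ)^s from by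
          rw [inv_div]]
        field_simp
      have h2s : (1:ℝ) ≤ (2:ℝ) ^ s :=
        Real.one_le_rpow (by norm_num) hs.le
      rw [hphi]
      calc ‖x‖ ^ (-s) ≤ (2:ℝ) ^ s * ‖x‖ ^ (-s) := by
            nlinarith [Real.rpow_nonneg (norm_nonneg x) (-s)]
        _ = (Real.exp 2⁻¹ * (3:ℝ) ^ s / V) *
              (Real.exp (-2⁻¹) * ((3/2:ℝ) ^ (-s) * ‖x‖ ^ (-s)) * V) := by
            rw [show (Real.exp 2⁻¹ * (3:ℝ) ^ s / V) *
                (Real.exp (-2⁻¹) * ((3/2:ℝ) ^ (-s) * ‖x‖ ^ (-s)) * V)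
              = (Real.exp 2⁻¹ * Real.exp (-2⁻¹)) * ((3:ℝ) ^ s * (3/2:ℝ) ^ (-s))
                  * (V / V) * ‖x‖ ^ (-s) from by ring, hEE, h32, div_self hVne]
            ring
        _ ≤ (Real.exp 2⁻¹ * (3:ℝ) ^ s / V) * psiOne n s x :=
            mul_le_mul_of_nonneg_left (hlowfar' hx2) hc₂0
end

section
/- Let E ⊂ ℝ^n be nonempty and bounded and let d(s) denote the lower s-box dimension profile of E. Then for all 0 < s ≤ t: d(t)/(1 + (1/s − 1/t)d(t)) ≤ d(s) ≤ s. -/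
open MeasureTheory Metric Classical Filter

/-- The capacity C_r^s(E): reciprocal of the infimal energy over probability
measures supported on the closure of E. -/
noncomputable def capacity (n : ℕ) (s r : ℝ) (E : Set (EuclideanSpace ℝ (Fin n))) : ℝ :=
  (sInf {I : ℝ | ∃ μ : Measure (EuclideanSpace ℝ (Fin n)),
    IsProbabilityMeasure μ ∧ μ (closure E)ᶜ = 0 ∧
      I = ∫ x, ∫ y, phiKer n s r (x - y) ∂μ ∂μ})⁻¹

/-- The lower s-box dimension profile of E. -/
noncomputable def lowerProfile (n : ℕ) (s : ℝ) (E : Set (EuclideanSpace ℝ (Fin n))) : ℝ :=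
  liminf (fun r => Real.log (capacity n s r E) / (-Real.log r)) (nhdsWithin 0 (Set.Ioi 0))

/-- The upper s-box dimension profile of E. -/
noncomputable def upperProfile (n : ℕ) (s : ℝ) (E : Set (EuclideanSpace ℝ (Fin n))) : ℝ :=
  limsup (fun r => Real.log (capacity n s r E) / (-Real.log r)) (nhdsWithin 0 (Set.Ioi 0))

/-- The lower box dimension of a bounded set, via covering numbers. -/
noncomputable def lowerBoxDim {X : Type*} [PseudoMetricSpace X] (E : Set X) : ℝ :=
  liminf (fun r => Real.log (coverNum E r) / (-Real.log r)) (nhdsWithin 0 (Set.Ioi 0))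

/-- The upper box dimension of a bounded set, via covering numbers. -/
noncomputable def upperBoxDim {X : Type*} [PseudoMetricSpace X] (E : Set X) : ℝ :=
  limsup (fun r => Real.log (coverNum E r) / (-Real.log r)) (nhdsWithin 0 (Set.Ioi 0))

set_option linter.unusedSectionVars false
set_option linter.unusedVariables false
set_option maxHeartbeats 1000000

section Aux
variable {n : ℕ}


variable {n : ℕ}

lemma phi_nonneg {s r : ℝ} (hr : 0 ≤ r) (x : EuclideanSpace ℝ (Fin n)) :
    0 ≤ phiKer n s r x := by
  unfold phiKer; split
  · norm_num
  · exact le_min one_pos.le (Real.rpow_nonneg (div_nonneg hr (norm_nonneg _)) s)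

lemma phi_le_one (s r : ℝ) (x : EuclideanSpace ℝ (Fin n)) : phiKer n s r x ≤ 1 := by
  unfold phiKer; split
  · exact le_refl 1
  · exact min_le_left _ _

lemma phi_measurable (s r : ℝ) : Measurable (phiKer n s r) := by
  unfold phiKer
  refine Measurable.ite ?_ measurable_const
    (measurable_const.min ((measurable_const.div measurable_norm).pow_const s))
  exact MeasurableSet.singleton 0 |>.congr rfl

lemma phi_ge {s r D : ℝ} (hr : 0 ≤ r) (hs : 0 ≤ s) (hD : 0 < D)
    (u : EuclideanSpace ℝ (Fin n)) (hu : ‖u‖ ≤ D) :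
    min 1 ((r / D) ^ s) ≤ phiKer n s r u := by
  unfold phiKer; split
  · exact min_le_left _ _
  · rename_i h
    have hu0 : 0 < ‖u‖ := norm_pos_iff.mpr h
    exact min_le_min (le_refl 1)
      (Real.rpow_le_rpow (div_nonneg hr hD.le) (div_le_div_of_nonneg_left hr hu0 hu) hs)

noncomputable def energy (n : ℕ) (s r : ℝ) (μ : Measure (EuclideanSpace ℝ (Fin n))) : ℝ :=
  ∫ x, ∫ y, phiKer n s r (x - y) ∂μ ∂μ

section
variable (s r : ℝ) (μ : Measure (EuclideanSpace ℝ (Fin n))) [IsProbabilityMeasure μ]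

lemma phi_meas2 : Measurable fun p : EuclideanSpace ℝ (Fin n) × EuclideanSpace ℝ (Fin n) =>
    phiKer n s r (p.1 - p.2) :=
  (phi_measurable s r).comp (measurable_fst.sub measurable_snd)

lemma inner_integrable (hr : 0 ≤ r) (x : EuclideanSpace ℝ (Fin n)) :
    Integrable (fun y => phiKer n s r (x - y)) μ := by
  refine (integrable_const (1:ℝ)).mono'
    (((phi_measurable s r).comp (measurable_const.sub measurable_id)).aestronglyMeasurable) ?_
  filter_upwards with y
  rw [Real.norm_eq_abs, abs_of_nonneg (phi_nonneg hr _)]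
  exact phi_le_one s r _

lemma inner_sm : StronglyMeasurable
    (fun x => ∫ y, phiKer n s r (x - y) ∂μ) :=
  (phi_meas2 s r).stronglyMeasurable.integral_prod_right'

lemma inner_le_one (hr : 0 ≤ r) (x : EuclideanSpace ℝ (Fin n)) :
    ∫ y, phiKer n s r (x - y) ∂μ ≤ 1 := by
  calc ∫ y, phiKer n s r (x - y) ∂μ ≤ ∫ _, (1:ℝ) ∂μ :=
        integral_mono (inner_integrable s r μ hr x) (integrable_const 1)
          (fun y => phi_le_one s r _)
    _ = 1 := by simp

lemma inner_nonneg (hr : 0 ≤ r) (x : EuclideanSpace ℝ (Fin n)) :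
    0 ≤ ∫ y, phiKer n s r (x - y) ∂μ :=
  integral_nonneg fun y => phi_nonneg hr _

lemma outer_integrable (hr : 0 ≤ r) :
    Integrable (fun x => ∫ y, phiKer n s r (x - y) ∂μ) μ := by
  refine (integrable_const (1:ℝ)).mono' (inner_sm s r μ).aestronglyMeasurable ?_
  filter_upwards with x
  rw [Real.norm_eq_abs, abs_of_nonneg (inner_nonneg s r μ hr x)]
  exact inner_le_one s r μ hr x

lemma energy_nonneg (hr : 0 ≤ r) : 0 ≤ energy n s r μ :=
  integral_nonneg fun x => inner_nonneg s r μ hr x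

lemma energy_le_one (hr : 0 ≤ r) : energy n s r μ ≤ 1 := by
  calc energy n s r μ ≤ ∫ _, (1:ℝ) ∂μ :=
        integral_mono (outer_integrable s r μ hr) (integrable_const 1)
          (fun x => inner_le_one s r μ hr x)
    _ = 1 := by simp

end


def ESet (n : ℕ) (s r : ℝ) (E : Set (EuclideanSpace ℝ (Fin n))) : Set ℝ :=
  {I : ℝ | ∃ μ : Measure (EuclideanSpace ℝ (Fin n)),
    IsProbabilityMeasure μ ∧ μ (closure E)ᶜ = 0 ∧ I = energy n s r μ}

lemma capacity_eq (n : ℕ) (s r : ℝ) (E : Set (EuclideanSpace ℝ (Fin n))) :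
    capacity n s r E = (sInf (ESet n s r E))⁻¹ := rfl

lemma ESet_nonempty (s r : ℝ) {E : Set (EuclideanSpace ℝ (Fin n))} (hne : E.Nonempty) :
    (ESet n s r E).Nonempty := by
  obtain ⟨x₀, hx₀⟩ := hne
  refine ⟨1, Measure.dirac x₀, inferInstance, ?_, ?_⟩
  · rw [Measure.dirac_apply' _ (isClosed_closure.measurableSet.compl)]
    exact Set.indicator_of_notMem (by simp [subset_closure hx₀]) _
  · rw [energy]
    rw [integral_dirac]
    rw [integral_dirac]
    simp [phiKer]

lemma ae_mem_closure {E : Set (EuclideanSpace ℝ (Fin n))}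
    {μ : Measure (EuclideanSpace ℝ (Fin n))} (hμ : μ (closure E)ᶜ = 0) :
    ∀ᵐ y ∂μ, y ∈ closure E := by
  rw [ae_iff]
  simpa [Set.compl_def] using hμ

lemma energy_ge {s r : ℝ} (hr : 0 ≤ r) (hs : 0 ≤ s)
    {E : Set (EuclideanSpace ℝ (Fin n))} (hE : Bornology.IsBounded E)
    {μ : Measure (EuclideanSpace ℝ (Fin n))} [IsProbabilityMeasure μ]
    (hμ : μ (closure E)ᶜ = 0) :
    min 1 ((r / max (diam (closure E)) 1) ^ s) ≤ energy n s r μ := by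
  set D := max (diam (closure E)) 1 with hD
  have hD0 : 0 < D := lt_of_lt_of_le one_pos (le_max_right _ _)
  have key : ∀ x ∈ closure E, min 1 ((r / D) ^ s) ≤ ∫ y, phiKer n s r (x - y) ∂μ := by
    intro x hx
    have : ∀ᵐ y ∂μ, min 1 ((r / D) ^ s) ≤ phiKer n s r (x - y) := by
      filter_upwards [ae_mem_closure hμ] with y hy
      refine phi_ge hr hs hD0 _ ?_
      calc ‖x - y‖ = dist x y := by rw [dist_eq_norm]
        _ ≤ diam (closure E) := dist_le_diam_of_mem hE.closure hx hy
        _ ≤ D := le_max_left _ _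
    calc min 1 ((r / D) ^ s) = ∫ _, min 1 ((r / D) ^ s) ∂μ := by simp
      _ ≤ _ := integral_mono_ae (integrable_const _) (inner_integrable s r μ hr x) this
  calc min 1 ((r / D) ^ s) = ∫ _, min 1 ((r / D) ^ s) ∂μ := by simp
    _ ≤ energy n s r μ := by
        refine integral_mono_ae (integrable_const _) (outer_integrable s r μ hr) ?_
        filter_upwards [ae_mem_closure hμ] with x hx using key x hx

lemma sInf_ESet_pos {s r : ℝ} (hr : 0 < r) (hr1 : r ≤ 1) (hs : 0 ≤ s)
    {E : Set (EuclideanSpace ℝ (Fin n))} (hne : E.Nonempty) (hE : Bornology.IsBounded E) :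
    (r / max (diam (closure E)) 1) ^ s ≤ sInf (ESet n s r E) := by
  set D := max (diam (closure E)) 1 with hD
  have hD1 : (1:ℝ) ≤ D := le_max_right _ _
  have hmin : min 1 ((r / D) ^ s) = (r / D) ^ s := by
    rw [min_eq_right]
    exact Real.rpow_le_one (by positivity) (div_le_one_of_le₀ (hr1.trans hD1) (by positivity)) hs
  refine le_csInf (ESet_nonempty s r hne) ?_
  rintro I ⟨μ, hμ1, hμ2, rfl⟩
  rw [← hmin]
  exact energy_ge hr.le hs hE hμ2

lemma ESet_bddBelow {s r : ℝ} (hr : 0 ≤ r) (E : Set (EuclideanSpace ℝ (Fin n))) :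
    BddBelow (ESet n s r E) := by
  refine ⟨0, ?_⟩
  rintro I ⟨μ, hμ1, hμ2, rfl⟩
  exact energy_nonneg s r μ hr

lemma sInf_ESet_le_one {s r : ℝ} (hr : 0 ≤ r)
    {E : Set (EuclideanSpace ℝ (Fin n))} (hne : E.Nonempty) :
    sInf (ESet n s r E) ≤ 1 := by
  obtain ⟨I, μ, hμ1, hμ2, rfl⟩ := ESet_nonempty s r hne (n := n)
  exact csInf_le_of_le (ESet_bddBelow hr E) ⟨μ, hμ1, hμ2, rfl⟩ (energy_le_one s r μ hr)


section profileBounds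
variable {s : ℝ} {E : Set (EuclideanSpace ℝ (Fin n))}

lemma capacity_bounds (hs : 0 < s) (hne : E.Nonempty) (hE : Bornology.IsBounded E)
    {r : ℝ} (hr : 0 < r) (hr1 : r ≤ 1) :
    1 ≤ capacity n s r E ∧
      capacity n s r E ≤ ((r / max (diam (closure E)) 1) ^ s)⁻¹ := by
  set D := max (diam (closure E)) 1 with hD
  have hD0 : (0:ℝ) < D := lt_of_lt_of_le one_pos (le_max_right _ _)
  have hc : (0:ℝ) < (r / D) ^ s := Real.rpow_pos_of_pos (by positivity) s
  have h1 := sInf_ESet_pos hr hr1 hs.le hne hE (n := n)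
  have h2 := sInf_ESet_le_one (s := s) hr.le hne (n := n)
  have hpos : 0 < sInf (ESet n s r E) := lt_of_lt_of_le hc h1
  rw [capacity_eq]
  constructor
  · rw [le_inv_comm₀ one_pos hpos]
    simpa using h2
  · exact inv_anti₀ hc h1

lemma f_eventually (hs : 0 < s) (hne : E.Nonempty) (hE : Bornology.IsBounded E) :
    ∀ᶠ r in nhdsWithin (0:ℝ) (Set.Ioi 0),
      0 ≤ Real.log (capacity n s r E) / (-Real.log r) ∧
      Real.log (capacity n s r E) / (-Real.log r) ≤
        s + s * Real.log (max (diam (closure E)) 1) / (-Real.log r) ∧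
      1 ≤ -Real.log r := by
  set D := max (diam (closure E)) 1 with hD
  have hD0 : (0:ℝ) < D := lt_of_lt_of_le one_pos (le_max_right _ _)
  have hmem : Set.Ioo (0:ℝ) (Real.exp (-1)) ∈ nhdsWithin (0:ℝ) (Set.Ioi 0) :=
    Ioo_mem_nhdsGT_of_mem ⟨le_refl _, Real.exp_pos _⟩
  filter_upwards [hmem] with r hr
  obtain ⟨hr0, hre⟩ := hr
  have hr1 : r ≤ 1 := le_of_lt (lt_of_lt_of_le hre (by
    simpa using Real.exp_le_exp.mpr (by norm_num : (-1:ℝ) ≤ 0)))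
  have hlog : Real.log r < -1 := by
    have := Real.log_lt_log hr0 hre
    simpa using this
  have hlogpos : 0 < -Real.log r := by linarith
  have hone : 1 ≤ -Real.log r := by linarith
  obtain ⟨hcap1, hcap2⟩ := capacity_bounds hs hne hE hr0 hr1
  refine ⟨?_, ?_, hone⟩
  · apply div_nonneg _ hlogpos.le
    exact Real.log_nonneg hcap1
  · have hlogcap : Real.log (capacity n s r E) ≤ s * Real.log D - s * Real.log r := by
      calc Real.log (capacity n s r E) ≤ Real.log (((r / D) ^ s)⁻¹) :=
            Real.log_le_log (lt_of_lt_of_le one_pos hcap1) hcap2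
        _ = -(s * Real.log (r / D)) := by
            rw [Real.log_inv, Real.log_rpow (by positivity)]
        _ = s * Real.log D - s * Real.log r := by
            rw [Real.log_div (ne_of_gt hr0) (ne_of_gt hD0)]; ring
    have hne' : -Real.log r ≠ 0 := ne_of_gt hlogpos
    calc Real.log (capacity n s r E) / (-Real.log r)
        ≤ (s * Real.log D - s * Real.log r) / (-Real.log r) := by
          gcongr
      _ = s + s * Real.log D / (-Real.log r) := by
          rw [show s * Real.log D - s * Real.log r = s * (-Real.log r) + s * Real.log D
            by ring, add_div, mul_div_cancel_right₀ s hne']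
end profileBounds

section liminfBounds
variable {s : ℝ} {E : Set (EuclideanSpace ℝ (Fin n))}

lemma tendsto_aux (s M : ℝ) :
    Tendsto (fun r : ℝ => s + s * M / (-Real.log r)) (nhdsWithin 0 (Set.Ioi 0)) (nhds s) := by
  have h1 : Tendsto (fun r : ℝ => -Real.log r) (nhdsWithin 0 (Set.Ioi 0)) atTop :=
    tendsto_neg_atBot_atTop.comp Real.tendsto_log_nhdsGT_zero
  have h2 : Tendsto (fun r : ℝ => s * M / (-Real.log r)) (nhdsWithin 0 (Set.Ioi 0)) (nhds 0) := by
    simpa [div_eq_mul_inv] using (h1.inv_tendsto_atTop.const_mul (s * M))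
  simpa using tendsto_const_nhds.add h2

lemma f_isBoundedUnder (hs : 0 < s) (hne : E.Nonempty) (hE : Bornology.IsBounded E) :
    IsBoundedUnder (· ≥ ·) (nhdsWithin (0:ℝ) (Set.Ioi 0))
      (fun r => Real.log (capacity n s r E) / (-Real.log r)) := by
  refine ⟨0, ?_⟩
  rw [eventually_map]
  filter_upwards [f_eventually hs hne hE] with r hr using hr.1

lemma f_isCoboundedUnder (hs : 0 < s) (hne : E.Nonempty) (hE : Bornology.IsBounded E) :
    IsCoboundedUnder (· ≥ ·) (nhdsWithin (0:ℝ) (Set.Ioi 0))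
      (fun r => Real.log (capacity n s r E) / (-Real.log r)) := by
  apply IsBoundedUnder.isCoboundedUnder_ge
  refine ⟨s + s * Real.log (max (diam (closure E)) 1), ?_⟩
  rw [eventually_map]
  have hD1 : (1:ℝ) ≤ max (diam (closure E)) 1 := le_max_right _ _
  have hlD : 0 ≤ Real.log (max (diam (closure E)) 1) := Real.log_nonneg hD1
  filter_upwards [f_eventually hs hne hE] with r hr
  refine hr.2.1.trans ?_
  have h1 : 0 < -Real.log r := lt_of_lt_of_le one_pos hr.2.2
  gcongr
  calc s * Real.log (max (diam (closure E)) 1) / (-Real.log r)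
      ≤ s * Real.log (max (diam (closure E)) 1) / 1 := by
        apply div_le_div_of_nonneg_left (by positivity) one_pos hr.2.2
    _ = _ := div_one _

lemma profile_nonneg (hs : 0 < s) (hne : E.Nonempty) (hE : Bornology.IsBounded E) :
    0 ≤ lowerProfile n s E := by
  refine le_liminf_of_le (f_isCoboundedUnder hs hne hE) ?_
  filter_upwards [f_eventually hs hne hE] with r hr using hr.1

lemma profile_le (hs : 0 < s) (hne : E.Nonempty) (hE : Bornology.IsBounded E) :
    lowerProfile n s E ≤ s := by
  set M := Real.log (max (diam (closure E)) 1) with hM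
  have hliminf : liminf (fun r : ℝ => s + s * M / (-Real.log r))
      (nhdsWithin 0 (Set.Ioi 0)) = s := (tendsto_aux s M).liminf_eq
  rw [lowerProfile]
  refine le_trans (liminf_le_liminf ?_ (f_isBoundedUnder hs hne hE) ?_) (le_of_eq hliminf)
  · filter_upwards [f_eventually hs hne hE] with r hr using hr.2.1
  · apply IsBoundedUnder.isCoboundedUnder_ge
    exact (tendsto_aux s M).isBoundedUnder_le

end liminfBounds

section compare

lemma phi_compare {s t r R : ℝ} (hs : 0 < s) (hst : s ≤ t) (hr : 0 < r) (hrR : r ≤ R)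
    (u : EuclideanSpace ℝ (Fin n)) :
    phiKer n s r u ≤ phiKer n t R u + (r / R) ^ s * (phiKer n t R u) ^ (s / t) := by
  have ht : 0 < t := lt_of_lt_of_le hs hst
  have hR : 0 < R := lt_of_lt_of_le hr hrR
  by_cases hu : u = 0
  · subst hu
    have e1 : phiKer n s r 0 = 1 := by simp [phiKer]
    have e2 : phiKer n t R 0 = 1 := by simp [phiKer]
    rw [e1, e2]
    have : (0:ℝ) ≤ (r / R) ^ s * (1:ℝ) ^ (s / t) := by positivity
    linarith
  · have hv : 0 < ‖u‖ := norm_pos_iff.mpr hu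
    by_cases hvR : ‖u‖ ≤ R
    · have h1 : phiKer n t R u = 1 := by
        simp only [phiKer, if_neg hu]
        rw [min_eq_left]
        exact Real.one_le_rpow ((one_le_div hv).mpr hvR) ht.le
      rw [h1]
      have h2 : phiKer n s r u ≤ 1 := phi_le_one s r u
      have : (0:ℝ) ≤ (r / R) ^ s * (1:ℝ) ^ (s / t) := by positivity
      linarith
    · push_neg at hvR
      have hrv : r < ‖u‖ := lt_of_le_of_lt hrR hvR
      have h1 : phiKer n t R u = (R / ‖u‖) ^ t := by
        simp only [phiKer, if_neg hu]
        rw [min_eq_right]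
        exact Real.rpow_le_one (by positivity) (div_le_one_of_le₀ hvR.le hv.le) ht.le
      have h2 : phiKer n s r u ≤ (r / ‖u‖) ^ s := by
        simp only [phiKer, if_neg hu]
        exact min_le_right _ _
      have key : (r / ‖u‖) ^ s = (r / R) ^ s * ((R / ‖u‖) ^ t) ^ (s / t) := by
        rw [← Real.rpow_mul (by positivity), mul_div_cancel₀ _ (ne_of_gt ht)]
        rw [← Real.mul_rpow (by positivity) (by positivity)]
        congr 1
        field_simp
      rw [h1]
      calc phiKer n s r u ≤ (r / ‖u‖) ^ s := h2
        _ = (r / R) ^ s * ((R / ‖u‖) ^ t) ^ (s / t) := key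
        _ ≤ (R / ‖u‖) ^ t + (r / R) ^ s * ((R / ‖u‖) ^ t) ^ (s / t) := by
            have : (0:ℝ) ≤ (R / ‖u‖) ^ t := by positivity
            linarith

lemma jensen_rpow {α : Type*} [MeasurableSpace α] {μ : Measure α} [IsProbabilityMeasure μ]
    {f : α → ℝ} (hm : AEStronglyMeasurable f μ) (h0 : ∀ x, 0 ≤ f x) (h1 : ∀ x, f x ≤ 1)
    {p : ℝ} (hp : 0 < p) (hp1 : p ≤ 1) :
    ∫ x, (f x) ^ p ∂μ ≤ (∫ x, f x ∂μ) ^ p := by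
  have hfi : Integrable f μ := by
    refine (integrable_const (1:ℝ)).mono' hm ?_
    filter_upwards with x
    rw [Real.norm_eq_abs, abs_of_nonneg (h0 x)]; exact h1 x
  have hgm : AEStronglyMeasurable (fun x => (f x) ^ p) μ :=
    (hm.aemeasurable.pow_const p).aestronglyMeasurable
  have hgi : Integrable (fun x => (f x) ^ p) μ := by
    refine (integrable_const (1:ℝ)).mono' hgm ?_
    filter_upwards with x
    rw [Real.norm_eq_abs, abs_of_nonneg (Real.rpow_nonneg (h0 x) p)]
    exact Real.rpow_le_one (h0 x) (h1 x) hp.le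
  have hconc : ConcaveOn ℝ (Set.Ici 0) (fun x : ℝ => x ^ p) :=
    Real.concaveOn_rpow hp.le hp1
  have hcont : ContinuousOn (fun x : ℝ => x ^ p) (Set.Ici 0) := fun x _ =>
    (Real.continuousAt_rpow_const x p (Or.inr hp.le)).continuousWithinAt
  exact hconc.le_map_integral hcont isClosed_Ici
    (Filter.Eventually.of_forall fun x => h0 x) hfi hgi

end compare

section energyCompare
variable {s t r R : ℝ} (μ : Measure (EuclideanSpace ℝ (Fin n))) [IsProbabilityMeasure μ]

lemma energy_compare (hs : 0 < s) (hst : s ≤ t) (hr : 0 < r) (hrR : r ≤ R) :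
    energy n s r μ ≤ energy n t R μ + (r / R) ^ s * (energy n t R μ) ^ (s / t) := by
  have ht : 0 < t := lt_of_lt_of_le hs hst
  have hR : 0 < R := lt_of_lt_of_le hr hrR
  have hpt : 0 < s / t := by positivity
  have hpt1 : s / t ≤ 1 := div_le_one_of_le₀ hst ht.le
  set A : EuclideanSpace ℝ (Fin n) → ℝ := fun x => ∫ y, phiKer n t R (x - y) ∂μ with hA
  have hA0 : ∀ x, 0 ≤ A x := fun x => inner_nonneg t R μ hR.le x
  have hA1 : ∀ x, A x ≤ 1 := fun x => inner_le_one t R μ hR.le x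
  have hAsm : StronglyMeasurable A := inner_sm t R μ
  -- integrability of φtR^{s/t} composed
  have hmeas_pow : ∀ x : EuclideanSpace ℝ (Fin n),
      AEStronglyMeasurable (fun y => phiKer n t R (x - y) ^ (s / t)) μ := fun x =>
    ((((phi_measurable t R).comp (measurable_const.sub measurable_id)).pow_const
      (s / t)).aestronglyMeasurable)
  have hint_pow : ∀ x, Integrable (fun y => phiKer n t R (x - y) ^ (s / t)) μ := by
    intro x
    refine (integrable_const (1:ℝ)).mono' (hmeas_pow x) ?_
    filter_upwards with y
    rw [Real.norm_eq_abs, abs_of_nonneg (Real.rpow_nonneg (phi_nonneg hR.le _) _)]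
    exact Real.rpow_le_one (phi_nonneg hR.le _) (phi_le_one t R _) hpt.le
  -- step 1 : inner comparison
  have step1 : ∀ x, ∫ y, phiKer n s r (x - y) ∂μ ≤ A x + (r / R) ^ s * (A x) ^ (s / t) := by
    intro x
    have hint1 : Integrable (fun y => phiKer n t R (x - y) +
        (r / R) ^ s * phiKer n t R (x - y) ^ (s / t)) μ :=
      (inner_integrable t R μ hR.le x).add ((hint_pow x).const_mul _)
    calc ∫ y, phiKer n s r (x - y) ∂μ
        ≤ ∫ y, (phiKer n t R (x - y) + (r / R) ^ s * phiKer n t R (x - y) ^ (s / t)) ∂μ := by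
          refine integral_mono (inner_integrable s r μ hr.le x) hint1 ?_
          intro y
          exact phi_compare hs hst hr hrR (x - y)
      _ = A x + (r / R) ^ s * ∫ y, phiKer n t R (x - y) ^ (s / t) ∂μ := by
          rw [integral_add (inner_integrable t R μ hR.le x) ((hint_pow x).const_mul _),
            integral_const_mul]
      _ ≤ A x + (r / R) ^ s * (A x) ^ (s / t) := by
          refine add_le_add_right (mul_le_mul_of_nonneg_left ?_ (by positivity)) _
          exact jensen_rpow ((((phi_measurable t R).comp
              (measurable_const.sub measurable_id))).aestronglyMeasurable)
              (fun y => phi_nonneg hR.le _) (fun y => phi_le_one t R _) hpt hpt1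
  -- step 2 : outer comparison
  have hint2 : Integrable (fun x => A x + (r / R) ^ s * (A x) ^ (s / t)) μ := by
    have hApow : Integrable (fun x => (A x) ^ (s / t)) μ := by
      refine (integrable_const (1:ℝ)).mono'
        ((hAsm.aestronglyMeasurable.aemeasurable.pow_const _).aestronglyMeasurable) ?_
      filter_upwards with x
      rw [Real.norm_eq_abs, abs_of_nonneg (Real.rpow_nonneg (hA0 x) _)]
      exact Real.rpow_le_one (hA0 x) (hA1 x) hpt.le
    exact (outer_integrable t R μ hR.le).add (hApow.const_mul _)
  calc energy n s r μ ≤ ∫ x, (A x + (r / R) ^ s * (A x) ^ (s / t)) ∂μ := by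
        refine integral_mono (outer_integrable s r μ hr.le) hint2 step1
    _ = energy n t R μ + (r / R) ^ s * ∫ x, (A x) ^ (s / t) ∂μ := by
        have hApow : Integrable (fun x => (A x) ^ (s / t)) μ := by
          refine (integrable_const (1:ℝ)).mono'
            ((hAsm.aestronglyMeasurable.aemeasurable.pow_const _).aestronglyMeasurable) ?_
          filter_upwards with x
          rw [Real.norm_eq_abs, abs_of_nonneg (Real.rpow_nonneg (hA0 x) _)]
          exact Real.rpow_le_one (hA0 x) (hA1 x) hpt.le
        rw [integral_add (outer_integrable t R μ hR.le) (hApow.const_mul _),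
          integral_const_mul]
        rfl
    _ ≤ energy n t R μ + (r / R) ^ s * (energy n t R μ) ^ (s / t) := by
        refine add_le_add_right (mul_le_mul_of_nonneg_left ?_ (by positivity)) _
        exact jensen_rpow hAsm.aestronglyMeasurable hA0 hA1 hpt hpt1

end energyCompare

section capCompare
variable {E : Set (EuclideanSpace ℝ (Fin n))}

lemma sInf_nonneg' {s r : ℝ} (hr : 0 ≤ r) (hne : E.Nonempty) :
    0 ≤ sInf (ESet n s r E) := by
  refine le_csInf (ESet_nonempty s r hne) ?_
  rintro I ⟨μ, hμ1, hμ2, rfl⟩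
  exact energy_nonneg s r μ hr

lemma sInf_compare {s t r R : ℝ} (hs : 0 < s) (hst : s ≤ t) (hr : 0 < r) (hrR : r ≤ R)
    (hne : E.Nonempty) :
    sInf (ESet n s r E) ≤ sInf (ESet n t R E) +
      (r / R) ^ s * (sInf (ESet n t R E)) ^ (s / t) := by
  have hR : 0 < R := lt_of_lt_of_le hr hrR
  have ht : 0 < t := lt_of_lt_of_le hs hst
  set ε := sInf (ESet n t R E) with hε
  have hε0 : 0 ≤ ε := sInf_nonneg' hR.le hne
  have hF : Tendsto (fun η : ℝ => (ε + η) + (r / R) ^ s * (ε + η) ^ (s / t))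
      (nhdsWithin 0 (Set.Ioi 0)) (nhds (ε + (r / R) ^ s * ε ^ (s / t))) := by
    have h1 : Tendsto (fun η : ℝ => ε + η) (nhds 0) (nhds ε) := by
      simpa using (continuous_add_left ε).tendsto (0:ℝ)
    have h2 : Tendsto (fun η : ℝ => (ε + η) ^ (s / t)) (nhds 0) (nhds (ε ^ (s / t))) :=
      ((Real.continuousAt_rpow_const ε (s / t) (Or.inr (by positivity))).tendsto).comp h1
    exact ((h1.add ((h2.const_mul _))).mono_left nhdsWithin_le_nhds)
  refine ge_of_tendsto hF ?_
  filter_upwards [self_mem_nhdsWithin] with η hη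
  obtain ⟨I, hImem, hIlt⟩ := exists_lt_of_csInf_lt (ESet_nonempty t R hne)
    (show sInf (ESet n t R E) < ε + η by rw [← hε]; linarith [Set.mem_Ioi.mp hη])
  obtain ⟨μ, hμ1, hμ2, rfl⟩ := hImem
  haveI := hμ1
  have hI0 : 0 ≤ energy n t R μ := energy_nonneg t R μ hR.le
  calc sInf (ESet n s r E) ≤ energy n s r μ :=
        csInf_le (ESet_bddBelow hr.le E) ⟨μ, hμ1, hμ2, rfl⟩
    _ ≤ energy n t R μ + (r / R) ^ s * (energy n t R μ) ^ (s / t) :=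
        energy_compare μ hs hst hr hrR
    _ ≤ (ε + η) + (r / R) ^ s * (ε + η) ^ (s / t) := by
        refine add_le_add hIlt.le (mul_le_mul_of_nonneg_left ?_ (by positivity))
        exact Real.rpow_le_rpow hI0 hIlt.le (by positivity)

lemma sInf_le_rpow {t R e : ℝ} (ht : 0 < t) (hne : E.Nonempty) (hE : Bornology.IsBounded E)
    (hR : 0 < R) (hR1 : R < 1)
    (hf : e ≤ Real.log (capacity n t R E) / (-Real.log R)) :
    sInf (ESet n t R E) ≤ R ^ e := by
  have hlogpos : 0 < -Real.log R := by
    have := Real.log_neg hR hR1; linarith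
  have hcap1 : 1 ≤ capacity n t R E := (capacity_bounds ht hne hE hR hR1.le).1
  have hcappos : 0 < capacity n t R E := lt_of_lt_of_le one_pos hcap1
  have hmul : e * (-Real.log R) ≤ Real.log (capacity n t R E) :=
    (le_div_iff₀ hlogpos).mp hf
  have hcap : R ^ (-e) ≤ capacity n t R E := by
    rw [← Real.log_le_log_iff (Real.rpow_pos_of_pos hR _) hcappos, Real.log_rpow hR]
    linarith
  have : (capacity n t R E)⁻¹ ≤ (R ^ (-e))⁻¹ :=
    inv_anti₀ (Real.rpow_pos_of_pos hR _) hcap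
  rw [Real.rpow_neg hR.le, inv_inv] at this
  calc sInf (ESet n t R E) = ((sInf (ESet n t R E))⁻¹)⁻¹ := (inv_inv _).symm
    _ = (capacity n t R E)⁻¹ := by rw [capacity_eq]
    _ ≤ R ^ e := this

end capCompare

section stepB
variable {E : Set (EuclideanSpace ℝ (Fin n))}

lemma tendsto_aux2 (a b : ℝ) :
    Tendsto (fun r : ℝ => a + b / (-Real.log r)) (nhdsWithin 0 (Set.Ioi 0)) (nhds a) := by
  have h1 : Tendsto (fun r : ℝ => -Real.log r) (nhdsWithin 0 (Set.Ioi 0)) atTop :=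
    tendsto_neg_atBot_atTop.comp Real.tendsto_log_nhdsGT_zero
  have h2 : Tendsto (fun r : ℝ => b / (-Real.log r)) (nhdsWithin 0 (Set.Ioi 0)) (nhds 0) := by
    simpa [div_eq_mul_inv] using (h1.inv_tendsto_atTop.const_mul b)
  simpa using tendsto_const_nhds.add h2

lemma stepB (hne : E.Nonempty) (hE : Bornology.IsBounded E)
    {s t : ℝ} (hs : 0 < s) (hst : s ≤ t) {e : ℝ} (he : 0 < e)
    (hed : e < lowerProfile n t E) :
    (1 + (1 / s - 1 / t) * e)⁻¹ * e ≤ lowerProfile n s E := by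
  have ht : 0 < t := lt_of_lt_of_le hs hst
  set c := 1 / s - 1 / t with hc
  have hc0 : 0 ≤ c := by
    rw [hc, sub_nonneg]
    exact one_div_le_one_div_of_le hs hst
  have h1ce : (1:ℝ) ≤ 1 + c * e := by nlinarith
  have hX : (0:ℝ) < 1 + c * e := lt_of_lt_of_le one_pos h1ce
  set θ := (1 + c * e)⁻¹ with hθ
  have hθ0 : 0 < θ := inv_pos.mpr hX
  have hθ1 : θ ≤ 1 := by
    rw [hθ]
    exact inv_le_one_of_one_le₀ h1ce
  -- eventual facts at scale R
  have hevR : ∀ᶠ R in nhdsWithin (0:ℝ) (Set.Ioi 0),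
      R ∈ Set.Ioo (0:ℝ) 1 ∧ e < Real.log (capacity n t R E) / (-Real.log R) := by
    filter_upwards [Ioo_mem_nhdsGT_of_mem (Set.mem_Ico.mpr ⟨le_refl (0:ℝ), one_pos⟩),
      eventually_lt_of_lt_liminf hed (f_isBoundedUnder ht hne hE)] with R h1 h2
    exact ⟨h1, h2⟩
  -- pull back along r ↦ r ^ θ
  have htend : Tendsto (fun r : ℝ => r ^ θ) (nhdsWithin 0 (Set.Ioi 0))
      (nhdsWithin 0 (Set.Ioi 0)) := by
    refine tendsto_nhdsWithin_of_tendsto_nhds_of_eventually_within _ ?_ ?_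
    · have hca : ContinuousAt (fun x : ℝ => x ^ θ) 0 :=
        Real.continuousAt_rpow_const 0 θ (Or.inr hθ0.le)
      have := hca.tendsto
      rw [Real.zero_rpow (ne_of_gt hθ0)] at this
      exact this.mono_left nhdsWithin_le_nhds
    · filter_upwards [self_mem_nhdsWithin] with r hr
      exact Real.rpow_pos_of_pos (Set.mem_Ioi.mp hr) θ
  have hev2 := htend.eventually hevR
  -- the main eventual bound
  have hmain : ∀ᶠ r in nhdsWithin (0:ℝ) (Set.Ioi 0),
      θ * e + (-Real.log 2) / (-Real.log r) ≤
        Real.log (capacity n s r E) / (-Real.log r) := by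
    filter_upwards [hev2, Ioo_mem_nhdsGT_of_mem (Set.mem_Ico.mpr ⟨le_refl (0:ℝ), one_pos⟩)]
      with r hrθ hr
    obtain ⟨hr0, hr1⟩ := Set.mem_Ioo.mp hr
    obtain ⟨hRmem, hRf⟩ := hrθ
    set R := r ^ θ with hR
    obtain ⟨hR0, hR1⟩ := Set.mem_Ioo.mp hRmem
    have hrR : r ≤ R := by
      calc r = r ^ (1:ℝ) := (Real.rpow_one r).symm
        _ ≤ r ^ θ := Real.rpow_le_rpow_of_exponent_ge hr0 hr1.le hθ1
    have hεle : sInf (ESet n t R E) ≤ R ^ e :=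
      sInf_le_rpow ht hne hE hR0 hR1 hRf.le
    have hε0 : 0 ≤ sInf (ESet n t R E) := sInf_nonneg' hR0.le hne
    -- capacity lower bound at scale r
    have key : sInf (ESet n s r E) ≤ 2 * r ^ (θ * e) := by
      have h1 : sInf (ESet n s r E) ≤ R ^ e + (r / R) ^ s * (R ^ e) ^ (s / t) := by
        refine (sInf_compare hs hst hr0 hrR hne).trans ?_
        refine add_le_add hεle (mul_le_mul_of_nonneg_left ?_ (by positivity))
        exact Real.rpow_le_rpow hε0 hεle (by positivity)
      have e1 : R ^ e = r ^ (θ * e) := by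
        rw [hR, ← Real.rpow_mul hr0.le]
      have e3 : (r / R) ^ s = r ^ ((1 - θ) * s) := by
        rw [hR]
        rw [show r / r ^ θ = r ^ ((1:ℝ) - θ) by
          rw [Real.rpow_sub hr0, Real.rpow_one]]
        rw [← Real.rpow_mul hr0.le]
      have e2 : (R ^ e) ^ (s / t) = r ^ (θ * e * (s / t)) := by
        rw [e1, ← Real.rpow_mul hr0.le]
      have e5 : (1 - θ) * s + θ * e * (s / t) = θ * e := by
        have hXne : (1 + c * e) ≠ 0 := ne_of_gt hX
        have hθ1' : θ * (1 + c * e) = 1 := inv_mul_cancel₀ hXne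
        have h3 : 1 - θ = θ * (c * e) := by linear_combination -hθ1'
        rw [h3, hc]
        field_simp
        ring
      calc sInf (ESet n s r E) ≤ R ^ e + (r / R) ^ s * (R ^ e) ^ (s / t) := h1
        _ = r ^ (θ * e) + r ^ ((1 - θ) * s + θ * e * (s / t)) := by
            rw [e2, e3, e1, ← Real.rpow_add hr0]
        _ = 2 * r ^ (θ * e) := by rw [e5]; ring
    have hpos2 : (0:ℝ) < 2 * r ^ (θ * e) := by positivity
    have hcap : (2 * r ^ (θ * e))⁻¹ ≤ capacity n s r E := by
      have hsipos : 0 < sInf (ESet n s r E) :=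
        lt_of_lt_of_le (Real.rpow_pos_of_pos (by positivity) s) (sInf_ESet_pos hr0 hr1.le hs.le hne hE)
      rw [capacity_eq]
      exact inv_anti₀ hsipos key
    have hlogpos : 0 < -Real.log r := by
      have := Real.log_neg hr0 hr1; linarith
    have hcappos : 0 < capacity n s r E := lt_of_lt_of_le (by positivity) hcap
    have hlogcap : -Real.log 2 + θ * e * (-Real.log r) ≤ Real.log (capacity n s r E) := by
      have := Real.log_le_log (by positivity) hcap
      rw [Real.log_inv, Real.log_mul (by norm_num) (ne_of_gt (Real.rpow_pos_of_pos hr0 _)),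
        Real.log_rpow hr0] at this
      linarith
    calc θ * e + (-Real.log 2) / (-Real.log r)
        = (-Real.log 2 + θ * e * (-Real.log r)) / (-Real.log r) := by
          rw [add_div, mul_div_cancel_right₀ _ (ne_of_gt hlogpos)]
          ring
      _ ≤ Real.log (capacity n s r E) / (-Real.log r) := by gcongr
  -- conclude via liminf
  have hlim : liminf (fun r : ℝ => θ * e + (-Real.log 2) / (-Real.log r))
      (nhdsWithin 0 (Set.Ioi 0)) = θ * e := (tendsto_aux2 _ _).liminf_eq
  have : θ * e ≤ lowerProfile n s E := by
    rw [lowerProfile, ← hlim]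
    exact liminf_le_liminf hmain (tendsto_aux2 _ _).isBoundedUnder_ge
      (f_isCoboundedUnder hs hne hE)
  exact this

end stepB

end Aux

theorem stmt_17 (n : ℕ) (hn : 1 ≤ n)
    (E : Set (EuclideanSpace ℝ (Fin n))) (hne : E.Nonempty) (hE : Bornology.IsBounded E)
    (s t : ℝ) (hs : 0 < s) (hst : s ≤ t) :
    lowerProfile n t E / (1 + (1 / s - 1 / t) * lowerProfile n t E) ≤ lowerProfile n s E ∧
      lowerProfile n s E ≤ s := by
  have ht : 0 < t := lt_of_lt_of_le hs hst
  refine ⟨?_, profile_le hs hne hE⟩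
  set d := lowerProfile n t E with hdd
  have hd0 : 0 ≤ d := profile_nonneg ht hne hE
  set c := 1 / s - 1 / t with hc
  have hc0 : 0 ≤ c := by
    rw [hc, sub_nonneg]
    exact one_div_le_one_div_of_le hs hst
  rcases eq_or_lt_of_le hd0 with hd | hd
  · rw [← hd]
    simpa using profile_nonneg hs hne hE
  · refine le_of_forall_pos_le_add ?_
    intro ε hε
    set δ := min ε (d / 2) with hδ
    have hδ0 : 0 < δ := lt_min hε (by linarith)
    have hδd : δ ≤ d / 2 := min_le_right _ _
    set e := d - δ with hedef
    have he0 : 0 < e := by rw [hedef]; linarith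
    have hed : e < d := by rw [hedef]; linarith
    have hB : (1 + c * e)⁻¹ * e ≤ lowerProfile n s E := stepB hne hE hs hst he0 hed
    set X := 1 + c * d with hX
    set Y := 1 + c * e with hY
    have hY1 : (1:ℝ) ≤ Y := by nlinarith
    have hX1 : (1:ℝ) ≤ X := by nlinarith
    have hYX : Y ≤ X := by
      rw [hX, hY]
      nlinarith
    have hXpos : (0:ℝ) < X := lt_of_lt_of_le one_pos hX1
    have hYpos : (0:ℝ) < Y := lt_of_lt_of_le one_pos hY1
    have h1 : e / X ≤ e / Y := div_le_div_of_nonneg_left he0.le hYpos hYX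
    have h2 : δ / X ≤ δ := by
      rw [div_le_iff₀ hXpos]
      nlinarith
    have hde : d = e + δ := by rw [hedef]; ring
    calc d / X = e / X + δ / X := by rw [hde, add_div]
      _ ≤ e / Y + δ := add_le_add h1 h2
      _ = Y⁻¹ * e + δ := by rw [div_eq_mul_inv, mul_comm]
      _ ≤ lowerProfile n s E + δ := by exact add_le_add_left hB _
      _ ≤ lowerProfile n s E + ε := by
          have : δ ≤ ε := min_le_left _ _
          linarith
end

section
/- Let f : ℝ^n → ℝ^m be a Lipschitz map with Lipschitz constant 1 and E ⊂ ℝ^n nonempty and compact. Then the lower box dimension of f(E) is at most the lower m-box dimension profile of E: liminf_{r→0} log N_r(f(E))/(−log r) ≤ liminf_{r→0} log C_r^m(E)/(−log r). -/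
open MeasureTheory Metric Classical Filter
open scoped ENNReal NNReal

namespace Stmt19Aux


variable {n m : ℕ}

lemma phiKer_natCast (n m : ℕ) (r : ℝ) (x : EuclideanSpace ℝ (Fin n)) :
    phiKer n (m : ℝ) r x = if x = 0 then 1 else min 1 ((r / ‖x‖) ^ m) := by
  unfold phiKer
  split <;> simp [Real.rpow_natCast]

lemma phiKer_measurable (n m : ℕ) (r : ℝ) : Measurable (phiKer n (m : ℝ) r) := by
  have : phiKer n (m : ℝ) r = fun x => if x = 0 then 1 else min 1 ((r / ‖x‖) ^ m) :=
    funext fun x => phiKer_natCast n m r x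
  rw [this]
  refine Measurable.ite ?_ measurable_const
    (measurable_const.min ((measurable_const.div measurable_norm).pow_const m))
  show MeasurableSet {x : EuclideanSpace ℝ (Fin n) | x = 0}
  simpa using MeasurableSet.singleton (0 : EuclideanSpace ℝ (Fin n))

lemma phiKer_nonneg {r : ℝ} (hr : 0 ≤ r) (x : EuclideanSpace ℝ (Fin n)) :
    0 ≤ phiKer n (m : ℝ) r x := by
  rw [phiKer_natCast]
  split
  · norm_num
  · exact le_min zero_le_one (pow_nonneg (div_nonneg hr (norm_nonneg _)) _)

lemma phiKer_le_one (r : ℝ) (x : EuclideanSpace ℝ (Fin n)) :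
    phiKer n (m : ℝ) r x ≤ 1 := by
  rw [phiKer_natCast]
  split
  · exact le_rfl
  · exact min_le_left _ _

lemma phiKer_zero (r : ℝ) : phiKer n (m : ℝ) r 0 = 1 := by rw [phiKer_natCast]; simp

/-- upper bound: if `0 < d ≤ ‖x‖` then `φ(x) ≤ min 1 ((r/d)^m)`. -/
lemma phiKer_le {r d : ℝ} (hr : 0 ≤ r) (hd : 0 < d) {x : EuclideanSpace ℝ (Fin n)}
    (h : d ≤ ‖x‖) : phiKer n (m : ℝ) r x ≤ min 1 ((r / d) ^ m) := by
  have hx : x ≠ 0 := by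
    intro h0
    rw [h0, norm_zero] at h
    exact absurd h (not_le.2 hd)
  rw [phiKer_natCast, if_neg hx]
  exact min_le_min le_rfl (pow_le_pow_left₀ (div_nonneg hr (le_trans hd.le h))
    (div_le_div_of_nonneg_left hr hd h) m)

/-- lower bound: if `‖x‖ ≤ d`, `0 < d` then `φ(x) ≥ min 1 ((r/d)^m)`. -/
lemma le_phiKer {r d : ℝ} (hr : 0 ≤ r) (hd : 0 < d) {x : EuclideanSpace ℝ (Fin n)}
    (h : ‖x‖ ≤ d) : min 1 ((r / d) ^ m) ≤ phiKer n (m : ℝ) r x := by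
  rw [phiKer_natCast]
  split
  · exact min_le_left _ _
  · rename_i hx
    have hxpos : 0 < ‖x‖ := norm_pos_iff.2 hx
    exact min_le_min le_rfl (pow_le_pow_left₀ (div_nonneg hr hd.le)
      (div_le_div_of_nonneg_left hr hxpos h) m)



/-- Volume packing: an `s`-separated set within distance `t` of `c` has at most
`((t + s/2)/(s/2))^m` points. -/
lemma card_sep_le {m : ℕ} {s t : ℝ} (hs : 0 < s) (ht : 0 ≤ t)
    (c : EuclideanSpace ℝ (Fin m)) (P : Finset (EuclideanSpace ℝ (Fin m)))
    (hsep : ∀ p ∈ P, ∀ q ∈ P, p ≠ q → s ≤ dist p q)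
    (hball : ∀ p ∈ P, dist p c ≤ t) :
    (P.card : ℝ) * (s / 2) ^ m ≤ (t + s / 2) ^ m := by
  set v : ℝ≥0∞ := volume (ball (0 : EuclideanSpace ℝ (Fin m)) 1) with hv
  have hv0 : v ≠ 0 := (measure_ball_pos _ _ one_pos).ne'
  have hvtop : v ≠ ⊤ := measure_ball_lt_top.ne
  have hs2 : (0:ℝ) < s / 2 := by linarith
  -- disjoint balls
  have hdisj : (P : Set (EuclideanSpace ℝ (Fin m))).PairwiseDisjoint
      (fun p => ball p (s / 2)) := by
    intro p hp q hq hpq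
    apply ball_disjoint_ball
    rw [show s / 2 + s / 2 = s by ring]
    exact hsep p hp q hq hpq
  have hmeas : ∀ p ∈ P, MeasurableSet (ball p (s / 2)) := fun p _ => measurableSet_ball
  have hunion : (⋃ p ∈ P, ball p (s / 2)) ⊆ closedBall c (t + s / 2) := by
    intro y hy
    simp only [Set.mem_iUnion] at hy
    obtain ⟨p, hp, hyp⟩ := hy
    rw [mem_closedBall]
    calc dist y c ≤ dist y p + dist p c := dist_triangle _ _ _
      _ ≤ s / 2 + t := add_le_add (le_of_lt (mem_ball.1 hyp)) (hball p hp)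
      _ = t + s / 2 := by ring
  have hsum : ∑ p ∈ P, volume (ball p (s / 2)) ≤ volume (closedBall c (t + s / 2)) := by
    rw [← measure_biUnion_finset hdisj hmeas]
    exact measure_mono hunion
  have hball_eq : ∀ p : EuclideanSpace ℝ (Fin m),
      volume (ball p (s / 2)) = ENNReal.ofReal ((s / 2) ^ m) * v := by
    intro p
    rw [hv, Measure.addHaar_ball_of_pos _ _ hs2, finrank_euclideanSpace_fin]
  have hcb : volume (closedBall c (t + s / 2)) = ENNReal.ofReal ((t + s / 2) ^ m) * v := by
    rw [hv, Measure.addHaar_closedBall _ _ (by linarith), finrank_euclideanSpace_fin]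
  rw [hcb] at hsum
  simp only [hball_eq, Finset.sum_const, nsmul_eq_mul] at hsum
  rw [← mul_assoc] at hsum
  have h2 : (P.card : ℝ≥0∞) * ENNReal.ofReal ((s / 2) ^ m) ≤ ENNReal.ofReal ((t + s / 2) ^ m) :=
    (ENNReal.mul_le_mul_iff_left hv0 hvtop).1 hsum
  have hps : 0 ≤ (s / 2) ^ m := pow_nonneg hs2.le m
  refine (ENNReal.ofReal_le_ofReal_iff (pow_nonneg (by linarith : (0:ℝ) ≤ t + s / 2) m)).1 ?_
  calc ENNReal.ofReal ((P.card : ℝ) * (s / 2) ^ m)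
        = (P.card : ℝ≥0∞) * ENNReal.ofReal ((s / 2) ^ m) := by
          rw [ENNReal.ofReal_mul (Nat.cast_nonneg _)]
          congr 1
          exact ENNReal.ofReal_natCast _
    _ ≤ ENNReal.ofReal ((t + s / 2) ^ m) := h2



lemma card_sep_le' {m : ℕ} {s t : ℝ} (hs : 0 < s) (ht : 0 ≤ t)
    (c : EuclideanSpace ℝ (Fin m)) (P : Finset (EuclideanSpace ℝ (Fin m)))
    (hsep : ∀ p ∈ P, ∀ q ∈ P, p ≠ q → s ≤ dist p q)
    (hball : ∀ p ∈ P, dist p c ≤ t)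
    (hcard : (P.card : ℝ) * (s / 2) ^ m ≤ (t + s / 2) ^ m) :
    (P.card : ℝ) ≤ ((t + s / 2) / (s / 2)) ^ m := by
  have h2 : (0:ℝ) < (s/2)^m := pow_pos (by linarith) m
  rw [div_pow]
  rw [le_div_iff₀ h2]
  exact hcard

/-- Dyadic annulus decomposition bound for the discrete potential. -/
lemma sum_phi_le {m : ℕ} {r dF : ℝ} (hr : 0 < r)
    (P : Finset (EuclideanSpace ℝ (Fin m)))
    (hsep : ∀ p ∈ P, ∀ q ∈ P, p ≠ q → r / 2 ≤ dist p q)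
    (hdiam : ∀ p ∈ P, ∀ q ∈ P, dist p q ≤ dF)
    {K : ℕ} (hK : dF < 2 ^ K * r)
    {p : EuclideanSpace ℝ (Fin m)} (hp : p ∈ P) :
    ∑ q ∈ P, (if q = p then (1:ℝ) else min 1 ((r / dist p q) ^ m))
      ≤ ((K : ℝ) + 2) * 10 ^ m := by
  set g : EuclideanSpace ℝ (Fin m) → ℝ :=
    fun q => if q = p then (1:ℝ) else min 1 ((r / dist p q) ^ m) with hg
  have hten : (1:ℝ) ≤ 10 ^ m := one_le_pow₀ (by norm_num)
  -- existence of a dyadic level for every point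
  have hex : ∀ q : EuclideanSpace ℝ (Fin m), ∃ k : ℕ, dist p q < 2 ^ k * r := by
    intro q
    obtain ⟨k, hk⟩ := pow_unbounded_of_one_lt (dist p q / r) (one_lt_two (α := ℝ))
    exact ⟨k, by rwa [div_lt_iff₀ hr] at hk⟩
  set idx : EuclideanSpace ℝ (Fin m) → ℕ := fun q => Nat.find (hex q) with hidx
  have hidx_spec : ∀ q, dist p q < 2 ^ (idx q) * r := fun q => Nat.find_spec (hex q)
  have hidx_min : ∀ q, ∀ j < idx q, ¬ dist p q < 2 ^ j * r := fun q j hj => Nat.find_min (hex q) hj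
  have hmaps : ∀ q ∈ P.erase p, idx q ∈ Finset.range (K + 1) := by
    intro q hq
    rw [Finset.mem_range, Nat.lt_succ_iff]
    exact Nat.find_le (lt_of_le_of_lt (hdiam p hp q (Finset.mem_of_mem_erase hq)) hK)
  have key : ∀ k ∈ Finset.range (K + 1),
      ∑ q ∈ (P.erase p).filter (fun q => idx q = k), g q ≤ 10 ^ m := by
    intro k _
    set Q := (P.erase p).filter (fun q => idx q = k) with hQ
    have hQsub : ∀ q ∈ Q, q ∈ P ∧ q ≠ p ∧ idx q = k := by
      intro q hq
      rw [hQ, Finset.mem_filter, Finset.mem_erase] at hq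
      exact ⟨hq.1.2, hq.1.1, hq.2⟩
    -- lower distance bound on the annulus
    have hlow : ∀ q ∈ Q, 2 ^ k * r / 2 ≤ dist p q := by
      intro q hq
      obtain ⟨hqP, hqp, hqk⟩ := hQsub q hq
      rcases Nat.eq_zero_or_pos k with hk0 | hkpos
      · rw [hk0]
        simpa using hsep p hp q hqP (Ne.symm hqp)
      · have h := hidx_min q (k - 1) (by rw [hqk]; omega)
        push_neg at h
        have h2 : (2:ℝ) ^ k = 2 ^ (k - 1) * 2 := by
          rw [← pow_succ]
          congr 1
          omega
        rw [h2]
        calc 2 ^ (k - 1) * 2 * r / 2 = 2 ^ (k - 1) * r := by ring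
          _ ≤ dist p q := h
    have hdistpos : ∀ q ∈ Q, 0 < dist p q := by
      intro q hq
      exact lt_of_lt_of_le (by positivity) (hlow q hq)
    -- bound each term
    have hterm : ∀ q ∈ Q, g q ≤ (2 / 2 ^ k) ^ m := by
      intro q hq
      obtain ⟨hqP, hqp, _⟩ := hQsub q hq
      rw [hg]
      simp only [if_neg hqp]
      refine le_trans (min_le_right _ _) ?_
      refine pow_le_pow_left₀ (div_nonneg hr.le (hdistpos q hq).le) ?_ m
      rw [div_le_div_iff₀ (hdistpos q hq) (by positivity)]
      have := hlow q hq
      nlinarith [hlow q hq, hr]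
    -- cardinality of the annulus
    have hcard : (Q.card : ℝ) ≤ (4 * 2 ^ k + 1) ^ m := by
      have h1 := card_sep_le (m := m) (s := r / 2) (t := 2 ^ k * r) (by linarith)
        (by positivity) p Q
        (fun a ha b hb hab => hsep a (hQsub a ha).1 b (hQsub b hb).1 hab)
        (fun a ha => by
          rw [dist_comm]
          have hlt : dist p a < 2 ^ k * r := (hQsub a ha).2.2 ▸ hidx_spec a
          exact hlt.le)
      have h2 : (Q.card : ℝ) ≤ ((2 ^ k * r + r / 2 / 2) / (r / 2 / 2)) ^ m := by
        rw [div_pow, le_div_iff₀ (pow_pos (by linarith) m)]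
        exact h1
      have heq : ((2:ℝ) ^ k * r + r / 2 / 2) / (r / 2 / 2) = 4 * 2 ^ k + 1 := by
        field_simp
        ring
      rwa [heq] at h2
    calc ∑ q ∈ Q, g q ≤ ∑ q ∈ Q, (2 / 2 ^ k) ^ m := Finset.sum_le_sum hterm
      _ = (Q.card : ℝ) * (2 / 2 ^ k) ^ m := by rw [Finset.sum_const, nsmul_eq_mul]
      _ ≤ (4 * 2 ^ k + 1) ^ m * (2 / 2 ^ k) ^ m := by
          refine mul_le_mul_of_nonneg_right hcard (by positivity)
      _ = ((4 * 2 ^ k + 1) * (2 / 2 ^ k)) ^ m := by rw [← mul_pow]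
      _ ≤ 10 ^ m := by
          refine pow_le_pow_left₀ (by positivity) ?_ m
          have h2k : (1:ℝ) ≤ 2 ^ k := one_le_pow₀ (by norm_num)
          have hkpos : (0:ℝ) < 2 ^ k := by positivity
          have heq2 : (4 * (2:ℝ) ^ k + 1) * (2 / 2 ^ k) = 8 + 2 / 2 ^ k := by
            field_simp
            ring
          have hle2 : (2:ℝ) / 2 ^ k ≤ 2 := by
            calc (2:ℝ) / 2 ^ k ≤ 2 / 1 := by
                  exact div_le_div_of_nonneg_left (by norm_num) one_pos h2k
              _ = 2 := by norm_num
          linarith [heq2.le, heq2.ge]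
  -- assemble
  have hsplit : ∑ q ∈ P, g q = g p + ∑ q ∈ P.erase p, g q :=
    (Finset.add_sum_erase P g hp).symm
  have hgp : g p = 1 := by rw [hg]; simp
  have hfib : ∑ q ∈ P.erase p, g q
      = ∑ k ∈ Finset.range (K + 1), ∑ q ∈ (P.erase p).filter (fun q => idx q = k), g q :=
    (Finset.sum_fiberwise_of_maps_to hmaps g).symm
  rw [hsplit, hgp, hfib]
  calc 1 + ∑ k ∈ Finset.range (K + 1), ∑ q ∈ (P.erase p).filter (fun q => idx q = k), g q
      ≤ 1 + ∑ k ∈ Finset.range (K + 1), (10:ℝ) ^ m := by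
        exact add_le_add_right (Finset.sum_le_sum key) 1
    _ = 1 + (K + 1) * 10 ^ m := by
        rw [Finset.sum_const, Finset.card_range, nsmul_eq_mul]
        push_cast
        ring
    _ ≤ ((K : ℝ) + 2) * 10 ^ m := by nlinarith



def eSet (n : ℕ) (s r : ℝ) (E : Set (EuclideanSpace ℝ (Fin n))) : Set ℝ :=
  {I : ℝ | ∃ μ : Measure (EuclideanSpace ℝ (Fin n)),
    IsProbabilityMeasure μ ∧ μ (closure E)ᶜ = 0 ∧
      I = ∫ x, ∫ y, phiKer n s r (x - y) ∂μ ∂μ}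

lemma capacity_eq (n : ℕ) (s r : ℝ) (E : Set (EuclideanSpace ℝ (Fin n))) :
    capacity n s r E = (sInf (eSet n s r E))⁻¹ := rfl

variable {n m : ℕ} {r : ℝ} {E : Set (EuclideanSpace ℝ (Fin n))}

lemma phiKer_integrable (hr : 0 ≤ r) (μ : Measure (EuclideanSpace ℝ (Fin n)))
    [IsProbabilityMeasure μ] (x : EuclideanSpace ℝ (Fin n)) :
    Integrable (fun y => phiKer n (m : ℝ) r (x - y)) μ := by
  refine Integrable.mono' (integrable_const 1)
    (((phiKer_measurable n m r).comp (measurable_const.sub measurable_id)).aestronglyMeasurable) ?_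
  refine Filter.Eventually.of_forall fun y => ?_
  rw [Real.norm_eq_abs, abs_le]
  exact ⟨by linarith [phiKer_nonneg (m := m) hr (x - y)], phiKer_le_one r (x - y)⟩

lemma potential_aesm (r : ℝ) (μ : Measure (EuclideanSpace ℝ (Fin n))) [SFinite μ] :
    AEStronglyMeasurable (fun x => ∫ y, phiKer n (m : ℝ) r (x - y) ∂μ) μ := by
  have h : StronglyMeasurable (fun p : (EuclideanSpace ℝ (Fin n)) × (EuclideanSpace ℝ (Fin n)) =>
      phiKer n (m : ℝ) r (p.1 - p.2)) :=
    ((phiKer_measurable n m r).comp (measurable_fst.sub measurable_snd)).stronglyMeasurable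
  exact h.integral_prod_right'.aestronglyMeasurable

lemma potential_integrable (hr : 0 ≤ r) (μ : Measure (EuclideanSpace ℝ (Fin n)))
    [IsProbabilityMeasure μ] :
    Integrable (fun x => ∫ y, phiKer n (m : ℝ) r (x - y) ∂μ) μ := by
  refine Integrable.mono' (integrable_const 1) (potential_aesm r μ) ?_
  refine Filter.Eventually.of_forall fun x => ?_
  calc ‖∫ y, phiKer n (m : ℝ) r (x - y) ∂μ‖ ≤ ∫ y, ‖phiKer n (m : ℝ) r (x - y)‖ ∂μ :=
        norm_integral_le_integral_norm _
    _ ≤ ∫ _, (1:ℝ) ∂μ := by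
        refine integral_mono_of_nonneg (Filter.Eventually.of_forall fun y => norm_nonneg _)
          (integrable_const 1) (Filter.Eventually.of_forall fun y => ?_)
        show ‖phiKer n (m : ℝ) r (x - y)‖ ≤ 1
        rw [Real.norm_eq_abs, abs_le]
        exact ⟨by linarith [phiKer_nonneg (m := m) hr (x - y)], phiKer_le_one r (x - y)⟩
    _ = 1 := by simp

lemma one_mem_eSet (hne : E.Nonempty) : (1:ℝ) ∈ eSet n (m : ℝ) r E := by
  obtain ⟨a, ha⟩ := hne
  refine ⟨Measure.dirac a, inferInstance, ?_, ?_⟩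
  · rw [Measure.dirac_apply]
    simp [Set.indicator_of_notMem, subset_closure ha]
  · rw [integral_dirac, integral_dirac]
    rw [sub_self, phiKer_zero]

lemma energy_ge (hr : 0 < r) (hE : Bornology.IsBounded E) :
    ∀ I ∈ eSet n (m : ℝ) r E, min 1 ((r / (Metric.diam E + 1)) ^ m) ≤ I := by
  rintro I ⟨μ, hμ, hsupp, rfl⟩
  set δ : ℝ := min 1 ((r / (Metric.diam E + 1)) ^ m) with hδ
  have hdpos : (0:ℝ) < Metric.diam E + 1 := by linarith [Metric.diam_nonneg (s := E)]
  have hae : ∀ᵐ x ∂μ, x ∈ closure E := by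
    rw [MeasureTheory.ae_iff]
    exact hsupp
  have hpot : ∀ x ∈ closure E, δ ≤ ∫ y, phiKer n (m : ℝ) r (x - y) ∂μ := by
    intro x hx
    have : ∀ᵐ y ∂μ, δ ≤ phiKer n (m : ℝ) r (x - y) := by
      filter_upwards [hae] with y hy
      refine le_phiKer hr.le hdpos ?_
      have : dist x y ≤ Metric.diam (closure E) :=
        Metric.dist_le_diam_of_mem hE.closure hx hy
      rw [Metric.diam_closure] at this
      rw [← dist_eq_norm]
      linarith
    calc δ = ∫ _, δ ∂μ := by simp
      _ ≤ ∫ y, phiKer n (m : ℝ) r (x - y) ∂μ :=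
        integral_mono_ae (integrable_const δ) (phiKer_integrable hr.le μ x) this
  calc δ = ∫ _, δ ∂μ := by simp
    _ ≤ ∫ x, ∫ y, phiKer n (m : ℝ) r (x - y) ∂μ ∂μ := by
      refine integral_mono_ae (integrable_const δ) (potential_integrable hr.le μ) ?_
      filter_upwards [hae] with x hx
      exact hpot x hx

lemma eSet_bddBelow (hr : 0 < r) (hE : Bornology.IsBounded E) :
    BddBelow (eSet n (m : ℝ) r E) :=
  ⟨_, energy_ge hr hE⟩

lemma sInf_eSet_pos (hr : 0 < r) (hE : Bornology.IsBounded E) (hne : E.Nonempty) :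
    0 < sInf (eSet n (m : ℝ) r E) := by
  have hδ : (0:ℝ) < min 1 ((r / (Metric.diam E + 1)) ^ m) := by
    have hdpos : (0:ℝ) < Metric.diam E + 1 := by linarith [Metric.diam_nonneg (s := E)]
    exact lt_min one_pos (pow_pos (div_pos hr hdpos) m)
  exact lt_of_lt_of_le hδ (le_csInf ⟨1, one_mem_eSet hne⟩ (energy_ge hr hE))

lemma sInf_eSet_le_one (hr : 0 < r) (hE : Bornology.IsBounded E) (hne : E.Nonempty) :
    sInf (eSet n (m : ℝ) r E) ≤ 1 :=
  csInf_le (eSet_bddBelow hr hE) (one_mem_eSet hne)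

lemma one_le_capacity (hr : 0 < r) (hE : Bornology.IsBounded E) (hne : E.Nonempty) :
    1 ≤ capacity n (m : ℝ) r E := by
  rw [capacity_eq]
  rw [le_inv_comm₀ one_pos (sInf_eSet_pos hr hE hne)]
  simpa using sInf_eSet_le_one hr hE hne

lemma capacity_le (hr : 0 < r) (hr1 : r ≤ 1) (hE : Bornology.IsBounded E) (hne : E.Nonempty) :
    capacity n (m : ℝ) r E ≤ ((Metric.diam E + 1) / r) ^ m := by
  have hdpos : (0:ℝ) < Metric.diam E + 1 := by linarith [Metric.diam_nonneg (s := E)]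
  set b : ℝ := ((Metric.diam E + 1) / r) ^ m with hb
  have hb1 : (1:ℝ) ≤ b := one_le_pow₀ ((le_div_iff₀ hr).2 (by linarith [Metric.diam_nonneg (s := E)]))
  have hδb : min 1 ((r / (Metric.diam E + 1)) ^ m) = b⁻¹ := by
    have : (r / (Metric.diam E + 1)) ^ m = b⁻¹ := by
      rw [hb, ← inv_pow, ← one_div, one_div_div]
    rw [this]
    exact min_eq_right (inv_le_one_of_one_le₀ hb1)
  have hlo : b⁻¹ ≤ sInf (eSet n (m : ℝ) r E) := by
    rw [← hδb]
    exact le_csInf ⟨1, one_mem_eSet hne⟩ (energy_ge hr hE)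
  rw [capacity_eq]
  calc (sInf (eSet n (m : ℝ) r E))⁻¹ ≤ (b⁻¹)⁻¹ :=
        inv_anti₀ (by positivity) hlo
    _ = b := inv_inv b



variable {n m : ℕ}

/-- Integral against a normalized sum of Dirac measures. -/
lemma integral_indexed {ι : Type*} (P : Finset ι) (x : ι → EuclideanSpace ℝ (Fin n))
    (g : EuclideanSpace ℝ (Fin n) → ℝ) :
    ∫ a, g a ∂(((P.card : ℝ≥0∞))⁻¹ • ∑ p ∈ P, Measure.dirac (x p))
      = (P.card : ℝ)⁻¹ * ∑ p ∈ P, g (x p) := by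
  rw [integral_smul_measure]
  rw [integral_finset_sum_measure (fun p _ => ((integrable_const (g (x p))).congr
    (MeasureTheory.ae_eq_dirac g).symm))]
  simp only [integral_dirac]
  rw [smul_eq_mul]
  congr 1
  rw [ENNReal.toReal_inv]
  simp

lemma indexed_isProb {ι : Type*} (P : Finset ι) (hP : P.Nonempty)
    (x : ι → EuclideanSpace ℝ (Fin n)) :
    IsProbabilityMeasure (((P.card : ℝ≥0∞))⁻¹ • ∑ p ∈ P, Measure.dirac (x p)) := by
  constructor
  rw [Measure.smul_apply, Measure.finset_sum_apply]
  simp only [measure_univ, Finset.sum_const, nsmul_eq_mul, mul_one, smul_eq_mul]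
  rw [ENNReal.inv_mul_cancel]
  · exact Nat.cast_ne_zero.2 (Finset.card_ne_zero.2 hP)
  · exact ENNReal.natCast_ne_top _

lemma indexed_supp {ι : Type*} (P : Finset ι) (x : ι → EuclideanSpace ℝ (Fin n))
    {E : Set (EuclideanSpace ℝ (Fin n))} (hx : ∀ p ∈ P, x p ∈ E) :
    (((P.card : ℝ≥0∞))⁻¹ • ∑ p ∈ P, Measure.dirac (x p)) (closure E)ᶜ = 0 := by
  rw [Measure.smul_apply, Measure.finset_sum_apply]
  have : ∀ p ∈ P, Measure.dirac (x p) (closure E)ᶜ = 0 := by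
    intro p hp
    rw [Measure.dirac_apply]
    simp [Set.indicator_of_notMem, subset_closure (hx p hp)]
  rw [Finset.sum_eq_zero this]
  simp

set_option maxHeartbeats 1000000 in
/-- The main covering estimate. -/
lemma coverNum_le_capacity (hm : 1 ≤ m)
    {E : Set (EuclideanSpace ℝ (Fin n))} (hne : E.Nonempty) (hE : IsCompact E)
    {f : EuclideanSpace ℝ (Fin n) → EuclideanSpace ℝ (Fin m)} (hf : LipschitzWith 1 f)
    {r : ℝ} (hr : 0 < r) {K : ℕ} (hK : Metric.diam (f '' E) < 2 ^ K * r) :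
    1 ≤ coverNum (f '' E) r ∧
      (coverNum (f '' E) r : ℝ) ≤ (((K : ℝ) + 2) * 10 ^ m) * capacity n (m : ℝ) r E := by
  classical
  set F : Set (EuclideanSpace ℝ (Fin m)) := f '' E with hF
  have hFc : IsCompact F := hE.image hf.continuous
  have hFb : Bornology.IsBounded F := hFc.isBounded
  have hFne : F.Nonempty := hne.image f
  obtain ⟨y₀, hy₀⟩ := hFne
  have hr4 : (0:ℝ) < r / 2 / 2 := by linarith
  -- the family of (r/2)-separated subsets of F
  set 𝒮 : Set (Finset (EuclideanSpace ℝ (Fin m))) :=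
    {P | ↑P ⊆ F ∧ ∀ p ∈ P, ∀ q ∈ P, p ≠ q → r / 2 ≤ dist p q} with h𝒮
  have hcard_bdd : ∀ P ∈ 𝒮, (P.card : ℝ) ≤ ((Metric.diam F + r / 2 / 2) / (r / 2 / 2)) ^ m := by
    intro P hP
    refine card_sep_le' (by linarith) Metric.diam_nonneg y₀ P hP.2
      (fun p hp => Metric.dist_le_diam_of_mem hFb (hP.1 hp) hy₀) ?_
    exact card_sep_le (by linarith) Metric.diam_nonneg y₀ P hP.2
      (fun p hp => Metric.dist_le_diam_of_mem hFb (hP.1 hp) hy₀)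
  set M : ℕ := ⌊((Metric.diam F + r / 2 / 2) / (r / 2 / 2)) ^ m⌋₊ with hM
  have hA_bdd : BddAbove (Finset.card '' 𝒮) := by
    refine ⟨M, ?_⟩
    rintro k ⟨P, hP, rfl⟩
    exact Nat.le_floor (hcard_bdd P hP)
  have hA_ne : (Finset.card '' 𝒮).Nonempty :=
    ⟨0, ∅, ⟨by simp, by simp⟩, rfl⟩
  set N : ℕ := sSup (Finset.card '' 𝒮) with hN
  obtain ⟨P, hP𝒮, hPcard⟩ := Nat.sSup_mem hA_ne hA_bdd
  have hN1 : 1 ≤ N := by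
    refine le_csSup hA_bdd ⟨{y₀}, ⟨by simpa using hy₀, by simp⟩, by simp⟩
  -- maximality
  have hmax : ∀ y ∈ F, ∃ p ∈ P, dist y p < r / 2 := by
    by_contra hcon
    push_neg at hcon
    obtain ⟨y, hyF, hy⟩ := hcon
    have hynotP : y ∉ P := fun hyP => absurd (hy y hyP) (by simp; linarith)
    have hmem : insert y P ∈ 𝒮 := by
      constructor
      · intro z hz
        rcases Finset.mem_insert.1 hz with rfl | hz
        · exact hyF
        · exact hP𝒮.1 hz
      · intro p hp q hq hpq
        rcases Finset.mem_insert.1 hp with hpy | hp'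
        · rcases Finset.mem_insert.1 hq with hqy | hq'
          · exact absurd (hpy.trans hqy.symm) hpq
          · rw [hpy]
            exact hy q hq'
        · rcases Finset.mem_insert.1 hq with hqy | hq'
          · rw [hqy, dist_comm]
            exact hy p hp'
          · exact hP𝒮.2 p hp' q hq' hpq
    have : N + 1 ≤ N := by
      refine le_csSup hA_bdd ⟨insert y P, hmem, ?_⟩
      rw [Finset.card_insert_of_notMem hynotP, hPcard]
    omega
  -- the covering by closed balls
  have hcover : coverNum F r ≤ N := by
    set S : Finset (Set (EuclideanSpace ℝ (Fin m))) :=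
      P.image (fun p => closedBall p (r / 2)) with hS
    have hmem : S.card ∈ {k | ∃ S' : Finset (Set (EuclideanSpace ℝ (Fin m))),
        S'.card = k ∧ (∀ A ∈ S', Metric.diam A ≤ r) ∧ F ⊆ ⋃₀ ↑S'} := by
      refine ⟨S, rfl, ?_, ?_⟩
      · intro A hA
        obtain ⟨p, _, rfl⟩ := Finset.mem_image.1 hA
        calc Metric.diam (closedBall p (r / 2)) ≤ 2 * (r / 2) := diam_closedBall (by linarith)
          _ = r := by ring
      · intro y hy
        obtain ⟨p, hp, hyp⟩ := hmax y hy
        refine Set.mem_sUnion.2 ⟨closedBall p (r / 2), ?_, ?_⟩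
        · exact Finset.mem_coe.2 (Finset.mem_image_of_mem _ hp)
        · exact mem_closedBall.2 hyp.le
    calc coverNum F r ≤ S.card := Nat.sInf_le hmem
      _ ≤ P.card := Finset.card_image_le
      _ = N := hPcard
  -- coverNum is at least 1
  have hcov1 : 1 ≤ coverNum F r := by
    rcases Nat.eq_zero_or_pos (coverNum F r) with h0 | h
    · exfalso
      have hmemset : coverNum F r ∈ {k | ∃ S' : Finset (Set (EuclideanSpace ℝ (Fin m))),
          S'.card = k ∧ (∀ A ∈ S', Metric.diam A ≤ r) ∧ F ⊆ ⋃₀ ↑S'} := by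
        apply Nat.sInf_mem
        refine ⟨(P.image (fun p => closedBall p (r / 2))).card,
          P.image (fun p => closedBall p (r / 2)), rfl, ?_, ?_⟩
        · intro A hA
          obtain ⟨p, _, rfl⟩ := Finset.mem_image.1 hA
          calc Metric.diam (closedBall p (r / 2)) ≤ 2 * (r / 2) := diam_closedBall (by linarith)
            _ = r := by ring
        · intro y hy
          obtain ⟨p, hp, hyp⟩ := hmax y hy
          refine Set.mem_sUnion.2 ⟨closedBall p (r / 2), ?_, mem_closedBall.2 hyp.le⟩
          exact Finset.mem_coe.2 (Finset.mem_image_of_mem _ hp)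
      obtain ⟨S', hS'card, _, hcover'⟩ := hmemset
      rw [h0] at hS'card
      rw [Finset.card_eq_zero.1 hS'card] at hcover'
      simpa using hcover' hy₀
    · exact h
  -- choose preimages
  have hpre : ∀ p ∈ P, ∃ a, a ∈ E ∧ f a = p := fun p hp => hP𝒮.1 hp
  choose! g hgE hgf using hpre
  have hPne : P.Nonempty := Finset.card_pos.1 (by rw [hPcard]; omega)
  set μ : Measure (EuclideanSpace ℝ (Fin n)) :=
    ((P.card : ℝ≥0∞))⁻¹ • ∑ p ∈ P, Measure.dirac (g p) with hμ
  haveI hprob : IsProbabilityMeasure μ := indexed_isProb P hPne g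
  have hsupp : μ (closure E)ᶜ = 0 := indexed_supp P g (fun p hp => hgE p hp)
  set I : ℝ := ∫ x, ∫ y, phiKer n (m : ℝ) r (x - y) ∂μ ∂μ with hI
  have hImem : I ∈ eSet n (m : ℝ) r E := ⟨μ, hprob, hsupp, rfl⟩
  set Λ : ℝ := ((K : ℝ) + 2) * 10 ^ m with hΛ
  have hΛpos : 0 < Λ := by positivity
  have hNR : (0:ℝ) < (P.card : ℝ) := by exact_mod_cast Finset.card_pos.2 hPne
  have hIle : I ≤ Λ / P.card := by
    have houter : I = (P.card : ℝ)⁻¹ * ∑ p ∈ P,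
        ((P.card : ℝ)⁻¹ * ∑ q ∈ P, phiKer n (m : ℝ) r (g p - g q)) := by
      rw [hI, hμ, integral_indexed P g]
      congr 1
      refine Finset.sum_congr rfl fun p hp => ?_
      exact integral_indexed P g (fun y => phiKer n (m : ℝ) r (g p - y))
    have hpbound : ∀ p ∈ P, ∑ q ∈ P, phiKer n (m : ℝ) r (g p - g q) ≤ Λ := by
      intro p hp
      have hterm : ∀ q ∈ P, phiKer n (m : ℝ) r (g p - g q)
          ≤ (if q = p then (1:ℝ) else min 1 ((r / dist p q) ^ m)) := by
        intro q hq
        by_cases hqp : q = p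
        · subst hqp
          rw [if_pos rfl, sub_self, phiKer_zero]
        · rw [if_neg hqp]
          have hd : 0 < dist p q := by
            have := hP𝒮.2 p hp q hq (Ne.symm hqp)
            linarith
          refine phiKer_le hr.le hd ?_
          rw [← dist_eq_norm]
          calc dist p q = dist (f (g p)) (f (g q)) := by rw [hgf p hp, hgf q hq]
            _ ≤ 1 * dist (g p) (g q) := by exact_mod_cast hf.dist_le_mul _ _
            _ = dist (g p) (g q) := one_mul _
      calc ∑ q ∈ P, phiKer n (m : ℝ) r (g p - g q)
          ≤ ∑ q ∈ P, (if q = p then (1:ℝ) else min 1 ((r / dist p q) ^ m)) :=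
            Finset.sum_le_sum hterm
        _ ≤ Λ := sum_phi_le hr P hP𝒮.2
            (fun a ha b hb => Metric.dist_le_diam_of_mem hFb (hP𝒮.1 ha) (hP𝒮.1 hb)) hK hp
    rw [houter]
    calc (P.card : ℝ)⁻¹ * ∑ p ∈ P, ((P.card : ℝ)⁻¹ * ∑ q ∈ P, phiKer n (m : ℝ) r (g p - g q))
        ≤ (P.card : ℝ)⁻¹ * ∑ p ∈ P, ((P.card : ℝ)⁻¹ * Λ) := by
          refine mul_le_mul_of_nonneg_left (Finset.sum_le_sum fun p hp =>
            mul_le_mul_of_nonneg_left (hpbound p hp) (by positivity)) (by positivity)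
      _ = Λ / P.card := by
          rw [Finset.sum_const, nsmul_eq_mul, ← mul_assoc, inv_mul_cancel₀ hNR.ne', one_mul,
            mul_comm, ← div_eq_mul_inv]
  have hsInf_le : sInf (eSet n (m : ℝ) r E) ≤ Λ / P.card :=
    le_trans (csInf_le (eSet_bddBelow hr hE.isBounded) hImem) hIle
  have hsInf_pos := sInf_eSet_pos (m := m) hr hE.isBounded hne
  have hcap : (P.card : ℝ) ≤ Λ * capacity n (m : ℝ) r E := by
    have h1 : (Λ / P.card)⁻¹ ≤ capacity n (m : ℝ) r E := by
      rw [capacity_eq]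
      exact inv_anti₀ hsInf_pos hsInf_le
    rw [inv_div] at h1
    have := (div_le_iff₀ hΛpos).1 h1
    linarith
  refine ⟨hcov1, ?_⟩
  calc (coverNum F r : ℝ) ≤ (N : ℝ) := by exact_mod_cast hcover
    _ = (P.card : ℝ) := by rw [hPcard]
    _ ≤ Λ * capacity n (m : ℝ) r E := hcap



lemma log_affine_small {cA cB ε : ℝ} (hA : 0 ≤ cA) (hB : 0 ≤ cB) (hε : 0 < ε) :
    ∀ᶠ t in atTop, Real.log (cA + cB * t) ≤ ε * t := by
  rcases eq_or_lt_of_le hB with hB0 | hBpos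
  · -- constant case
    have : Tendsto (fun t : ℝ => ε * t) atTop atTop :=
      Tendsto.const_mul_atTop hε tendsto_id
    filter_upwards [this.eventually_ge_atTop (Real.log cA), eventually_ge_atTop (0:ℝ)]
      with t h1 h2
    rw [← hB0]
    simpa using h1
  · have haff : Tendsto (fun t : ℝ => cA + cB * t) atTop atTop :=
      tendsto_atTop_add_const_left _ _ (Tendsto.const_mul_atTop hBpos tendsto_id)
    have hε' : 0 < ε / (cA + cB + 1) := by positivity
    have h2 := (Real.isLittleO_log_id_atTop.def hε')
    filter_upwards [haff.eventually h2, eventually_ge_atTop (1:ℝ)] with t hlog ht1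
    have htpos : (0:ℝ) < t := lt_of_lt_of_le one_pos ht1
    have hval : 0 ≤ cA + cB * t := by positivity
    calc Real.log (cA + cB * t) ≤ |Real.log (cA + cB * t)| := le_abs_self _
      _ = ‖Real.log (cA + cB * t)‖ := (Real.norm_eq_abs _).symm
      _ ≤ ε / (cA + cB + 1) * ‖id (cA + cB * t)‖ := hlog
      _ = ε / (cA + cB + 1) * (cA + cB * t) := by
          rw [id_eq, Real.norm_eq_abs, abs_of_nonneg hval]
      _ ≤ ε / (cA + cB + 1) * ((cA + cB + 1) * t) := by
          refine mul_le_mul_of_nonneg_left ?_ hε'.le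
          nlinarith
      _ = ε * t := by
          field_simp


end Stmt19Aux


open Stmt19Aux in
theorem stmt_19 (n m : ℕ) (hn : 1 ≤ n) (hm : 1 ≤ m)
    (E : Set (EuclideanSpace ℝ (Fin n))) (hne : E.Nonempty) (hE : IsCompact E)
    (f : EuclideanSpace ℝ (Fin n) → EuclideanSpace ℝ (Fin m)) (hf : LipschitzWith 1 f) :
    lowerBoxDim (f '' E) ≤ lowerProfile n m E := by
  classical
  set l : Filter ℝ := nhdsWithin 0 (Set.Ioi 0) with hl
  have hlne : l.NeBot := by rw [hl]; infer_instance
  set F : Set (EuclideanSpace ℝ (Fin m)) := f '' E with hF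
  set dF : ℝ := Metric.diam F with hdF
  have hdF0 : 0 ≤ dF := Metric.diam_nonneg
  set dE : ℝ := Metric.diam E with hdE
  have hdE0 : 0 ≤ dE := Metric.diam_nonneg
  set g : ℝ → ℝ := fun r => Real.log (coverNum F r) / (-Real.log r) with hg
  set h : ℝ → ℝ := fun r => Real.log (capacity n m r E) / (-Real.log r) with hh
  have hgoal1 : lowerBoxDim F = liminf g l := rfl
  have hgoal2 : lowerProfile n m E = liminf h l := rfl
  have hlog : Tendsto (fun r : ℝ => -Real.log r) l atTop :=
    tendsto_neg_atBot_atTop.comp Real.tendsto_log_nhdsGT_zero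
  have hrpos : ∀ᶠ r in l, 0 < r := eventually_mem_nhdsWithin
  -- dyadic scale counter
  set Kf : ℝ → ℕ := fun r => ⌊Real.logb 2 ((dF + 1) / r)⌋₊ + 1 with hKf
  have hKspec : ∀ r : ℝ, 0 < r → dF < 2 ^ (Kf r) * r := by
    intro r hr
    have hq : (0:ℝ) < (dF + 1) / r := by positivity
    have h1 : Real.logb 2 ((dF + 1) / r) < (Kf r : ℝ) := by
      rw [hKf]
      push_cast
      exact Nat.lt_floor_add_one _
    have h2 : (dF + 1) / r < 2 ^ (Kf r) := by
      calc (dF + 1) / r = (2:ℝ) ^ Real.logb 2 ((dF + 1) / r) :=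
            (Real.rpow_logb two_pos (by norm_num) hq).symm
        _ < (2:ℝ) ^ ((Kf r : ℝ)) := by
            exact Real.rpow_lt_rpow_of_exponent_lt one_lt_two h1
        _ = 2 ^ (Kf r) := by
            rw [Real.rpow_natCast]
    have := (div_lt_iff₀ hr).1 h2
    nlinarith
  -- eventual boundedness facts for h
  have hhev : ∀ᶠ r in l, 0 ≤ h r ∧ h r ≤ 2 * m := by
    filter_upwards [hrpos, hlog.eventually_ge_atTop (max 1 (Real.log (dE + 1)))]
      with r hr ht
    set t : ℝ := -Real.log r with hts
    have ht1 : (1:ℝ) ≤ t := le_trans (le_max_left _ _) ht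
    have htA : Real.log (dE + 1) ≤ t := le_trans (le_max_right _ _) ht
    have htpos : (0:ℝ) < t := lt_of_lt_of_le one_pos ht1
    have hr1 : r ≤ 1 := by
      by_contra hcon
      push_neg at hcon
      have : 0 < Real.log r := Real.log_pos hcon
      rw [hts] at *
      linarith
    have hcap1 : 1 ≤ capacity n (m:ℝ) r E := one_le_capacity hr hE.isBounded hne
    have hcaple : capacity n (m:ℝ) r E ≤ ((dE + 1) / r) ^ m :=
      capacity_le hr hr1 hE.isBounded hne
    constructor
    · exact div_nonneg (Real.log_nonneg hcap1) htpos.le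
    · rw [hh]
      have hlogcap : Real.log (capacity n (m:ℝ) r E) ≤ (m:ℝ) * (Real.log (dE + 1) + t) := by
        calc Real.log (capacity n (m:ℝ) r E) ≤ Real.log (((dE + 1) / r) ^ m) :=
              Real.log_le_log (by linarith) hcaple
          _ = (m:ℝ) * Real.log ((dE + 1) / r) := by rw [Real.log_pow]
          _ = (m:ℝ) * (Real.log (dE + 1) - Real.log r) := by
              rw [Real.log_div (by linarith) hr.ne']
          _ = (m:ℝ) * (Real.log (dE + 1) + t) := by rw [hts]; ring
      show Real.log (capacity n (m:ℝ) r E) / (-Real.log r) ≤ 2 * m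
      rw [← hts]
      rw [div_le_iff₀ htpos]
      have hm0 : (0:ℝ) ≤ (m:ℝ) := Nat.cast_nonneg m
      nlinarith
  -- g is eventually nonnegative
  have hgev : ∀ᶠ r in l, 0 ≤ g r := by
    filter_upwards [hrpos, hlog.eventually_gt_atTop 0] with r hr ht
    have hcov1 := (coverNum_le_capacity hm hne hE hf hr (hKspec r hr)).1
    have : (1:ℝ) ≤ (coverNum F r : ℝ) := by exact_mod_cast hcov1
    exact div_nonneg (Real.log_nonneg this) ht.le
  -- the per-ε estimate
  have key : ∀ ε : ℝ, 0 < ε → liminf g l ≤ liminf h l + ε := by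
    intro ε hε
    set cA : ℝ := (Real.log (dF + 1) / Real.log 2 + 3) * 10 ^ m with hcA
    set cB : ℝ := (1 / Real.log 2 + 1) * 10 ^ m with hcB
    have hlog2 : (0:ℝ) < Real.log 2 := Real.log_pos one_lt_two
    have hA0 : 0 ≤ cA := by
      have : 0 ≤ Real.log (dF + 1) := Real.log_nonneg (by linarith)
      positivity
    have hB0 : 0 ≤ cB := by positivity
    have hev : ∀ᶠ r in l, g r ≤ h r + ε := by
      filter_upwards [hrpos, hlog.eventually_ge_atTop (1:ℝ),
        hlog.eventually (log_affine_small hA0 hB0 hε)] with r hr ht hsmall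
      set t : ℝ := -Real.log r with hts
      have htpos : (0:ℝ) < t := lt_of_lt_of_le one_pos ht
      have hr1 : r < 1 := by
        by_contra hcon
        push_neg at hcon
        have : 0 ≤ Real.log r := Real.log_nonneg hcon
        rw [hts] at htpos
        linarith
      obtain ⟨hcov1, hcovle⟩ := coverNum_le_capacity hm hne hE hf hr (hKspec r hr)
      set Λ : ℝ := ((Kf r : ℝ) + 2) * 10 ^ m with hΛ
      have h10 : (1:ℝ) ≤ 10 ^ m := one_le_pow₀ (by norm_num : (1:ℝ) ≤ 10)
      have hΛ1 : 1 ≤ Λ := by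
        rw [hΛ]
        nlinarith [(Nat.cast_nonneg (Kf r) : (0:ℝ) ≤ (Kf r : ℝ))]
      have hcap1 : 1 ≤ capacity n (m:ℝ) r E := one_le_capacity hr hE.isBounded hne
      -- Λ is at most the affine bound
      have hΛle : Λ ≤ cA + cB * t := by
        have hq1 : (1:ℝ) ≤ (dF + 1) / r := by
          rw [le_div_iff₀ hr]
          linarith
        have hfl : (⌊Real.logb 2 ((dF + 1) / r)⌋₊ : ℝ) ≤ Real.logb 2 ((dF + 1) / r) :=
          Nat.floor_le (Real.logb_nonneg one_lt_two hq1)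
        have hlogb : Real.logb 2 ((dF + 1) / r)
            = (Real.log (dF + 1) + t) / Real.log 2 := by
          rw [Real.logb, Real.log_div (by linarith) hr.ne', hts]
          ring
        have hKle : (Kf r : ℝ) + 2 ≤ Real.log (dF + 1) / Real.log 2 + t / Real.log 2 + 3 := by
          have h1 : (Kf r : ℝ) ≤ Real.logb 2 ((dF + 1) / r) + 1 := by
            rw [hKf]
            push_cast
            linarith
          rw [hlogb] at h1
          have hsplit : (Real.log (dF + 1) + t) / Real.log 2
              = Real.log (dF + 1) / Real.log 2 + t / Real.log 2 := by ring
          rw [hsplit] at h1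
          linarith
        have hX0 : (0:ℝ) ≤ 10 ^ m := by positivity
        calc Λ = ((Kf r : ℝ) + 2) * 10 ^ m := hΛ
          _ ≤ (Real.log (dF + 1) / Real.log 2 + t / Real.log 2 + 3) * 10 ^ m :=
              mul_le_mul_of_nonneg_right hKle hX0
          _ = (Real.log (dF + 1) / Real.log 2 + 3) * 10 ^ m
              + (1 / Real.log 2) * 10 ^ m * t := by ring
          _ ≤ (Real.log (dF + 1) / Real.log 2 + 3) * 10 ^ m
              + (1 / Real.log 2 + 1) * 10 ^ m * t := by
              have hstep : (1 / Real.log 2) * 10 ^ m * t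
                  ≤ (1 / Real.log 2 + 1) * 10 ^ m * t := by
                refine mul_le_mul_of_nonneg_right
                  (mul_le_mul_of_nonneg_right (by linarith) hX0) htpos.le
              linarith
          _ = cA + cB * t := by rw [hcA, hcB]
      have hlogΛ : Real.log Λ ≤ ε * t := by
        calc Real.log Λ ≤ Real.log (cA + cB * t) := Real.log_le_log (by linarith) hΛle
          _ ≤ ε * t := hsmall
      -- combine
      have hcovpos : (0:ℝ) < (coverNum F r : ℝ) := by exact_mod_cast hcov1
      have hcappos : (0:ℝ) < capacity n (m:ℝ) r E := by linarith
      have hlogcov : Real.log (coverNum F r) ≤ Real.log Λ + Real.log (capacity n (m:ℝ) r E) := by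
        calc Real.log (coverNum F r) ≤ Real.log (Λ * capacity n (m:ℝ) r E) :=
              Real.log_le_log hcovpos hcovle
          _ = Real.log Λ + Real.log (capacity n (m:ℝ) r E) :=
              Real.log_mul (by linarith) (by linarith)
      show Real.log (coverNum F r) / (-Real.log r) ≤ Real.log (capacity n (m:ℝ) r E) / (-Real.log r) + ε
      rw [← hts]
      rw [div_le_iff₀ htpos] at *
      have hcapln : 0 ≤ Real.log (capacity n (m:ℝ) r E) := Real.log_nonneg hcap1
      calc Real.log (coverNum F r) ≤ Real.log Λ + Real.log (capacity n (m:ℝ) r E) := hlogcov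
        _ ≤ ε * t + Real.log (capacity n (m:ℝ) r E) := by linarith
        _ = (Real.log (capacity n (m:ℝ) r E) / t + ε) * t := by
            field_simp
            ring
    -- liminf manipulation
    have hgB : IsBoundedUnder (· ≥ ·) l g :=
      ⟨0, eventually_map.2 (hgev.mono fun r hr => hr)⟩
    have hhBa : IsBoundedUnder (· ≤ ·) l h :=
      ⟨2 * m, eventually_map.2 (hhev.mono fun r hr => hr.2)⟩
    have hhBb : IsBoundedUnder (· ≥ ·) l h :=
      ⟨0, eventually_map.2 (hhev.mono fun r hr => hr.1)⟩
    have hhεBa : IsBoundedUnder (· ≤ ·) l (fun r => h r + ε) :=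
      ⟨2 * m + ε, eventually_map.2 (hhev.mono fun r hr => by
        have := hr.2
        simp only []
        linarith)⟩
    have hco : IsCoboundedUnder (· ≥ ·) l (fun r => h r + ε) :=
      hhεBa.isCoboundedUnder_ge
    have hco2 : IsCoboundedUnder (· ≥ ·) l h := hhBa.isCoboundedUnder_ge
    calc liminf g l ≤ liminf (fun r => h r + ε) l := liminf_le_liminf hev hgB hco
      _ = liminf h l + ε := liminf_add_const l h ε hco2 hhBb
  rw [hgoal1, hgoal2]
  exact le_of_forall_pos_le_add key
end
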